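/- In EFF₁, a fibration f: B → A is trivial (a fibration that is an equivalence) if and only if f has a section s: A → B for which there exist a homotopy H: 1_B ≃ sf and a 2-homotopy M: fH ∼ 1_f. -/

import Mathlib

namespace EffPaper

/-! ### A small kit for tracking by partial computable functions.

We encode "partial computable function" via Mathlib's `Partrec` on `ℕ →. ℕ`.
`CompComputes I O` says: there is a partial computable function which, on the input
`I x`, converges and outputs `O x` (for every `x` in some index type `X`).
`CompFinds I S` says: there is a partial computable function which, on the input
`I x`, converges and outputs some element of the set `S x`. -/

def CompComputes {X : Sort*} (I O : X → ℕ) : Prop :=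
  ∃ F : ℕ →. ℕ, Partrec F ∧ ∀ x, O x ∈ F (I x)

def CompFinds {X : Sort*} (I : X → ℕ) (S : X → Set ℕ) : Prop :=
  ∃ F : ℕ →. ℕ, Partrec F ∧ ∀ x, ∃ k, k ∈ F (I x) ∧ k ∈ S x

namespace CompComputes

protected theorem id {X : Sort*} (I : X → ℕ) : CompComputes I I :=
  ⟨fun n => Part.some n, Partrec.some, fun x => Part.mem_some _⟩

protected theorem const {X : Sort*} (I : X → ℕ) (c : ℕ) : CompComputes I fun _ => c :=
  ⟨fun _ => Part.some c, (Computable.const c).partrec, fun _ => Part.mem_some _⟩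

protected theorem comp {X : Sort*} {I M O : X → ℕ}
    (h₂ : CompComputes M O) (h₁ : CompComputes I M) : CompComputes I O := by
  obtain ⟨F₁, pF₁, s₁⟩ := h₁
  obtain ⟨F₂, pF₂, s₂⟩ := h₂
  refine ⟨fun n => (F₁ n).bind F₂, pF₁.bind (pF₂.comp Computable.snd), fun x => ?_⟩
  exact Part.mem_bind_iff.mpr ⟨M x, s₁ x, s₂ x⟩

protected theorem pair {X : Sort*} {I a b : X → ℕ}
    (ha : CompComputes I a) (hb : CompComputes I b) :
    CompComputes I (fun x => Nat.pair (a x) (b x)) := by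
  obtain ⟨F₁, pF₁, s₁⟩ := ha
  obtain ⟨F₂, pF₂, s₂⟩ := hb
  refine ⟨fun n => (F₁ n).bind fun u => (F₂ n).map fun v => Nat.pair u v, ?_, fun x => ?_⟩
  · refine pF₁.bind ?_
    have : Computable₂ fun (p : ℕ × ℕ) (v : ℕ) => Nat.pair p.2 v :=
      Primrec₂.to_comp (Primrec₂.natPair.comp (Primrec.snd.comp Primrec.fst) Primrec.snd)
    exact Partrec.map (pF₂.comp Computable.fst) this
  · exact Part.mem_bind_iff.mpr ⟨a x, s₁ x, (Part.mem_map_iff _).mpr ⟨b x, s₂ x, rfl⟩⟩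

protected theorem unpairL {X : Sort*} (I : X → ℕ) :
    CompComputes I (fun x => (I x).unpair.1) :=
  ⟨fun n => Part.some n.unpair.1,
    (Primrec.to_comp (Primrec.fst.comp Primrec.unpair)).partrec, fun _ => Part.mem_some _⟩

protected theorem unpairR {X : Sort*} (I : X → ℕ) :
    CompComputes I (fun x => (I x).unpair.2) :=
  ⟨fun n => Part.some n.unpair.2,
    (Primrec.to_comp (Primrec.snd.comp Primrec.unpair)).partrec, fun _ => Part.mem_some _⟩

protected theorem projL {X : Sort*} (a b : X → ℕ) :
    CompComputes (fun x => Nat.pair (a x) (b x)) a := by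
  have := CompComputes.unpairL (X := X) (fun x => Nat.pair (a x) (b x))
  simpa [Nat.unpair_pair] using this

protected theorem projR {X : Sort*} (a b : X → ℕ) :
    CompComputes (fun x => Nat.pair (a x) (b x)) b := by
  have := CompComputes.unpairR (X := X) (fun x => Nat.pair (a x) (b x))
  simpa [Nat.unpair_pair] using this

protected theorem precomp {X Y : Sort*} {I O : X → ℕ} (h : CompComputes I O) (e : Y → X) :
    CompComputes (fun y => I (e y)) (fun y => O (e y)) := by
  obtain ⟨F, pF, s⟩ := h
  exact ⟨F, pF, fun y => s (e y)⟩

protected theorem toFinds {X : Sort*} {I o : X → ℕ} {S : X → Set ℕ}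
    (h : CompComputes I o) (hm : ∀ x, o x ∈ S x) : CompFinds I S := by
  obtain ⟨F, pF, s⟩ := h
  exact ⟨F, pF, fun x => ⟨o x, s x, hm x⟩⟩


protected theorem congr {X : Sort*} {I O O' : X → ℕ}
    (h : CompComputes I O) (he : ∀ x, O x = O' x) : CompComputes I O' := by
  obtain ⟨F, pF, s⟩ := h
  exact ⟨F, pF, fun x => he x ▸ s x⟩


/-- Values tracked by a partial computable function are determined by the input. -/
protected theorem determined {X : Sort*} {I O : X → ℕ} (h : CompComputes I O)
    {x y : X} (hxy : I x = I y) : O x = O y := by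
  obtain ⟨F, pF, s⟩ := h
  exact Part.mem_unique (s x) (hxy ▸ s y)

end CompComputes

namespace CompFinds

protected theorem toComputes {X : Sort*} {I : X → ℕ} {S : X → Set ℕ} (h : CompFinds I S) :
    ∃ o : X → ℕ, (∀ x, o x ∈ S x) ∧ CompComputes I o := by
  obtain ⟨F, pF, s⟩ := h
  refine ⟨fun x => (s x).choose, fun x => (s x).choose_spec.2, F, pF, fun x => (s x).choose_spec.1⟩

/-- Reindex a `CompFinds` along `e` and chase the input through a computable function. -/
protected theorem via {Y X : Sort*} {J : X → ℕ} {S : X → Set ℕ} (h : CompFinds J S)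
    {I : Y → ℕ} (e : Y → X) (hc : CompComputes I (fun y => J (e y))) :
    CompFinds I (fun y => S (e y)) := by
  obtain ⟨o, hm, hcc⟩ := h.toComputes
  exact CompComputes.toFinds ((hcc.precomp e).comp hc) (fun y => hm (e y))

end CompFinds

end EffPaper

namespace EffPaper

open CategoryTheory

universe v u

/-! ### Path categories (Van den Berg–Moerdijk style), abstractly.

A `PathStruct` on a category is a pair of classes of maps: fibrations and equivalences.
`IsPathCategory` expresses the seven axioms of a path category. -/

structure PathStruct (C : Type u) [Category.{v} C] where
  Fib : ∀ ⦃X Y : C⦄, (X ⟶ Y) → Prop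
  Eqv : ∀ ⦃X Y : C⦄, (X ⟶ Y) → Prop

section PathCatDefs

variable {C : Type u} [Category.{v} C]

/-- `T` is a terminal object. -/
def IsTerminalObj (T : C) : Prop := ∀ Z : C, ∃ f : Z ⟶ T, ∀ g : Z ⟶ T, g = f

/-- The square with projections `p₁, p₂` is a pullback of the cospan `f, g`. -/
def IsPB {P X Y Z : C} (p₁ : P ⟶ X) (p₂ : P ⟶ Y) (f : X ⟶ Z) (g : Y ⟶ Z) : Prop :=
  p₁ ≫ f = p₂ ≫ g ∧ ∀ (Q : C) (q₁ : Q ⟶ X) (q₂ : Q ⟶ Y), q₁ ≫ f = q₂ ≫ g →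
    ∃! h : Q ⟶ P, h ≫ p₁ = q₁ ∧ h ≫ p₂ = q₂

/-- `p₁, p₂` exhibit their common domain as a binary product of `X` and `Y`. -/
def IsBinProd {P X Y : C} (p₁ : P ⟶ X) (p₂ : P ⟶ Y) : Prop :=
  ∀ (Q : C) (q₁ : Q ⟶ X) (q₂ : Q ⟶ Y), ∃! h : Q ⟶ P, h ≫ p₁ = q₁ ∧ h ≫ p₂ = q₂

variable (S : PathStruct C)

/-- `X → PX → X × X` is a path object for `X`: the first map is an equivalence, the
second (the pairing of `s` and `t` into a binary product `X × X`) is a fibration,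
and the composite is the diagonal. -/
def IsPathObj {X PX : C} (r : X ⟶ PX) (s t : PX ⟶ X) : Prop :=
  S.Eqv r ∧ r ≫ s = 𝟙 X ∧ r ≫ t = 𝟙 X ∧
  ∃ (W : C) (π₁ π₂ : W ⟶ X) (h : PX ⟶ W),
    IsBinProd π₁ π₂ ∧ h ≫ π₁ = s ∧ h ≫ π₂ = t ∧ S.Fib h

/-- A path object for `p : X ⟶ I` in the slice path category `C(I)`:
a factorisation of the fibrewise diagonal `X ⟶ X ×_I X` as an equivalence `r`
followed by a fibration. -/
def IsRelPathObj {X I PX : C} (p : X ⟶ I) (r : X ⟶ PX) (s t : PX ⟶ X) : Prop :=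
  S.Eqv r ∧ r ≫ s = 𝟙 X ∧ r ≫ t = 𝟙 X ∧ s ≫ p = t ≫ p ∧
  ∃ (W : C) (π₁ π₂ : W ⟶ X) (h : PX ⟶ W),
    IsPB π₁ π₂ p p ∧ h ≫ π₁ = s ∧ h ≫ π₂ = t ∧ S.Fib h

/-- The seven axioms for a path category. -/
structure IsPathCategory : Prop where
  fib_of_iso : ∀ {X Y : C} (f : X ⟶ Y), IsIso f → S.Fib f
  fib_comp : ∀ {X Y Z : C} (f : X ⟶ Y) (g : Y ⟶ Z), S.Fib f → S.Fib g → S.Fib (f ≫ g)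
  terminal : ∃ T : C, IsTerminalObj T ∧ ∀ (X : C) (f : X ⟶ T), S.Fib f
  pullback : ∀ {X Y Z : C} (f : X ⟶ Z) (g : Y ⟶ Z), S.Fib f →
    ∃ (P : C) (p₁ : P ⟶ X) (p₂ : P ⟶ Y), IsPB p₁ p₂ f g ∧ S.Fib p₂
  eqv_of_iso : ∀ {X Y : C} (f : X ⟶ Y), IsIso f → S.Eqv f
  two_out_of_six : ∀ {X Y Z W : C} (f : X ⟶ Y) (g : Y ⟶ Z) (h : Z ⟶ W),
    S.Eqv (f ≫ g) → S.Eqv (g ≫ h) →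
    S.Eqv f ∧ S.Eqv g ∧ S.Eqv h ∧ S.Eqv (f ≫ g ≫ h)
  path_obj : ∀ X : C, ∃ (PX : C) (r : X ⟶ PX) (s t : PX ⟶ X), IsPathObj S r s t
  triv_fib_pb : ∀ {X Y Z P : C} (f : X ⟶ Z) (g : Y ⟶ Z) (p₁ : P ⟶ X) (p₂ : P ⟶ Y),
    S.Fib f → S.Eqv f → IsPB p₁ p₂ f g → S.Fib p₂ ∧ S.Eqv p₂
  triv_fib_sect : ∀ {X Y : C} (f : X ⟶ Y), S.Fib f → S.Eqv f → ∃ s : Y ⟶ X, s ≫ f = 𝟙 Y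

/-- Two parallel maps are homotopic: `(f,g)` factors through some path object. -/
def Homotopic {Z X : C} (f g : Z ⟶ X) : Prop :=
  ∃ (PX : C) (r : X ⟶ PX) (s t : PX ⟶ X), IsPathObj S r s t ∧
    ∃ H : Z ⟶ PX, H ≫ s = f ∧ H ≫ t = g

/-- `f` and `g` are fibrewise homotopic over the codomain of `p`:
`(f,g)` factors through some path object of `p` in the slice. -/
def FibHomotopic {Z X I : C} (p : X ⟶ I) (f g : Z ⟶ X) : Prop :=
  ∃ (PX : C) (r : X ⟶ PX) (s t : PX ⟶ X), IsRelPathObj S p r s t ∧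
    ∃ H : Z ⟶ PX, H ≫ s = f ∧ H ≫ t = g

/-- `IsNTypeFib S n f` says that `f` is a fibration of `(n-2)`-types; so `n = 0`
corresponds to hlevel `-2` (trivial fibrations), `n = 1` to propositions,
`n = 2` to sets and `n = 3` to groupoids. -/
def IsNTypeFib : ℕ → ∀ ⦃Y X : C⦄, (Y ⟶ X) → Prop
  | 0, _, _, f => S.Fib f ∧ S.Eqv f
  | n+1, Y, _, f => S.Fib f ∧ ∃ (PY W : C) (r : Y ⟶ PY) (s t : PY ⟶ Y)
      (π₁ π₂ : W ⟶ Y) (h : PY ⟶ W),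
      IsRelPathObj S f r s t ∧ IsPB π₁ π₂ f f ∧ h ≫ π₁ = s ∧ h ≫ π₂ = t ∧
      IsNTypeFib n h

/-- The (strictly) commutative square with vertical fibrations `g` (left) and `f` (right),
top `top` and bottom `bot`, is a homotopy pullback: the induced map to the actual
pullback is an equivalence. -/
def IsHomotopyPB {D Cc B A : C} (g : D ⟶ Cc) (top : D ⟶ B) (f : B ⟶ A) (bot : Cc ⟶ A) :
    Prop :=
  g ≫ bot = top ≫ f ∧ ∃ (P : C) (p₁ : P ⟶ Cc) (p₂ : P ⟶ B) (h : D ⟶ P),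
    IsPB p₁ p₂ bot f ∧ h ≫ p₁ = g ∧ h ≫ p₂ = top ∧ S.Eqv h

/-- A transport structure on the fibration `p : Y ⟶ X`, relative to the path object
`(PX, r, s, t)` and the pullback `(Q, q₁, q₂)` of `s : PX ⟶ X` along `p`:
a map `Γ : Y ×_X PX ⟶ Y` with `p ∘ Γ = t ∘ q₂` and `Γ ∘ (1_Y, r ∘ p) ≃_X 1_Y`. -/
def IsTransport {Y X PX Q : C} (p : Y ⟶ X) (r : X ⟶ PX) (s t : PX ⟶ X)
    (q₁ : Q ⟶ Y) (q₂ : Q ⟶ PX) (Γ : Q ⟶ Y) : Prop :=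
  Γ ≫ p = q₂ ≫ t ∧
  ∀ j : Y ⟶ Q, j ≫ q₁ = 𝟙 Y → j ≫ q₂ = p ≫ r → FibHomotopic S p (j ≫ Γ) (𝟙 Y)

/-- A fibration `p : Y ⟶ X` is univalent: whenever `f, g : Z ⟶ X` and
`w : f*p ⟶ g*p` is an equivalence over `Z`, there is a homotopy `H` from `f` to `g`
such that `w` is fibrewise homotopic over `Z` to the map induced by `H` and a
transport structure on `p`. -/
def Univalent {Y X : C} (p : Y ⟶ X) : Prop :=
  ∀ {Z Zf Zg : C} (f g : Z ⟶ X) (a₁ : Zf ⟶ Z) (a₂ : Zf ⟶ Y) (b₁ : Zg ⟶ Z) (b₂ : Zg ⟶ Y),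
    IsPB a₁ a₂ f p → IsPB b₁ b₂ g p →
    ∀ w : Zf ⟶ Zg, w ≫ b₁ = a₁ → S.Eqv w →
    ∃ (PX Q : C) (r : X ⟶ PX) (s t : PX ⟶ X) (q₁ : Q ⟶ Y) (q₂ : Q ⟶ PX) (Γ : Q ⟶ Y)
      (H : Z ⟶ PX) (k : Zf ⟶ Q) (w' : Zf ⟶ Zg),
      IsPathObj S r s t ∧ IsPB q₁ q₂ p s ∧ IsTransport S p r s t q₁ q₂ Γ ∧
      H ≫ s = f ∧ H ≫ t = g ∧
      k ≫ q₁ = a₂ ∧ k ≫ q₂ = a₁ ≫ H ∧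
      w' ≫ b₁ = a₁ ∧ w' ≫ b₂ = k ≫ Γ ∧
      FibHomotopic S b₁ w w'

/-- `π : E ⟶ U` is a representation for the class `Small`: it is small, and every
small fibration is a homotopy pullback of it. -/
def IsRepresentation (Small : ∀ ⦃X Y : C⦄, (X ⟶ Y) → Prop) {E U : C} (π : E ⟶ U) : Prop :=
  Small π ∧ ∀ ⦃B A : C⦄ (f : B ⟶ A), Small f →
    ∃ (c : A ⟶ U) (top : B ⟶ E), IsHomotopyPB S f top π c

/-- `M` is a good lift for the universal property of the homotopy Π-type
`(pE, u₁, u₂, ε)` of `g` along `f`, at the map `h : A ⟶ X` with chosen pullback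
`(Ah, v₁, v₂)` of `h` along `f` and `m : f*h ⟶ g` over `Y`. -/
def HPiLiftGood {Y X Z E F A Ah : C} (f : Y ⟶ X) (g : Z ⟶ Y) (pE : E ⟶ X)
    (u₁ : F ⟶ E) (u₂ : F ⟶ Y) (ε : F ⟶ Z)
    (h : A ⟶ X) (v₁ : Ah ⟶ A) (v₂ : Ah ⟶ Y) (m : Ah ⟶ Z) (M : A ⟶ E) : Prop :=
  M ≫ pE = h ∧ ∀ fM : Ah ⟶ F, fM ≫ u₁ = v₁ ≫ M → fM ≫ u₂ = v₂ →
    FibHomotopic S g (fM ≫ ε) m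

/-- `(pE, u₁, u₂, ε)` is a homotopy Π-type of the fibration `g : Z ⟶ Y` along the
fibration `f : Y ⟶ X`.  Here `pE : E ⟶ X` is the Π-fibration, `(F, u₁, u₂)` is a
pullback of `pE` along `f`, and `ε : f*pE ⟶ g` is the counit (a map over `Y`). -/
structure IsHPi {Y X Z E F : C} (f : Y ⟶ X) (g : Z ⟶ Y) (pE : E ⟶ X)
    (u₁ : F ⟶ E) (u₂ : F ⟶ Y) (ε : F ⟶ Z) : Prop where
  fib : S.Fib pE
  pb : IsPB u₁ u₂ pE f
  over' : ε ≫ g = u₂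
  lift : ∀ {A Ah : C} (h : A ⟶ X) (v₁ : Ah ⟶ A) (v₂ : Ah ⟶ Y), IsPB v₁ v₂ h f →
    ∀ m : Ah ⟶ Z, m ≫ g = v₂ →
      ∃ M : A ⟶ E, HPiLiftGood S f g pE u₁ u₂ ε h v₁ v₂ m M
  unique : ∀ {A Ah : C} (h : A ⟶ X) (v₁ : Ah ⟶ A) (v₂ : Ah ⟶ Y), IsPB v₁ v₂ h f →
    ∀ m : Ah ⟶ Z, m ≫ g = v₂ → ∀ M M' : A ⟶ E,
      HPiLiftGood S f g pE u₁ u₂ ε h v₁ v₂ m M →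
      HPiLiftGood S f g pE u₁ u₂ ε h v₁ v₂ m M' →
      FibHomotopic S pE M M'

/-- The path category has homotopy Π-types. -/
def HasHPi : Prop := ∀ ⦃Y X Z : C⦄ (f : Y ⟶ X) (g : Z ⟶ Y), S.Fib f → S.Fib g →
  ∃ (E F : C) (pE : E ⟶ X) (u₁ : F ⟶ E) (u₂ : F ⟶ Y) (ε : F ⟶ Z),
    IsHPi S f g pE u₁ u₂ ε

/-- A class of small fibrations: contained in the fibrations, containing all
isomorphisms, closed under composition and stable under homotopy pullback. -/
def IsSmallClass (Small : ∀ ⦃X Y : C⦄, (X ⟶ Y) → Prop) : Prop :=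
  (∀ ⦃X Y : C⦄ (f : X ⟶ Y), Small f → S.Fib f) ∧
  (∀ ⦃X Y : C⦄ (f : X ⟶ Y), IsIso f → Small f) ∧
  (∀ ⦃X Y Z : C⦄ (f : X ⟶ Y) (g : Y ⟶ Z), Small f → Small g → Small (f ≫ g)) ∧
  (∀ ⦃D Cc B A : C⦄ (g : D ⟶ Cc) (top : D ⟶ B) (f : B ⟶ A) (bot : Cc ⟶ A),
    S.Fib g → S.Fib f → Small f → IsHomotopyPB S g top f bot → Small g)

/-- The class `Small` is closed under homotopy Π-types along arbitrary fibrations: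
it is impredicative (polymorphic). -/
def ClosedUnderHPi (Small : ∀ ⦃X Y : C⦄, (X ⟶ Y) → Prop) : Prop :=
  ∀ ⦃Y X Z : C⦄ (f : Y ⟶ X) (g : Z ⟶ Y), S.Fib f → Small g →
    ∀ ⦃E F : C⦄ (pE : E ⟶ X) (u₁ : F ⟶ E) (u₂ : F ⟶ Y) (ε : F ⟶ Z),
      IsHPi S f g pE u₁ u₂ ε → Small pE

end PathCatDefs

end EffPaper
namespace EffPaper
open CategoryTheory

/-! ### The category `EFF₁`. -/

/-- An object of `EFF₁`: a set `A` with realizers `α : A → ℕ`, sets of 1-cells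
`hom a a' ⊆ ℕ` and sets of 2-cells `hom2 a a' π π' ⊆ ℕ` for parallel 1-cells
`π, π' ∈ hom a a'`, together with effective identity, inverse and composition
operations on 1-cells, computable structural 2-cells (unitors, inverse laws,
associators) and computable identity, vertical composition, inverse and horizontal
composition operations on 2-cells. -/
structure Eff1Obj : Type 1 where
  A : Type
  α : A → ℕ
  hom : A → A → Set ℕ
  hom2 : A → A → ℕ → ℕ → Set ℕ
  -- effective operations on 1-cells
  id1 : ∀ a : A, {n : ℕ // n ∈ hom a a}
  inv1 : ∀ a a' : A, {n : ℕ // n ∈ hom a a'} → {n : ℕ // n ∈ hom a' a}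
  comp1 : ∀ a a' a'' : A,
    {n : ℕ // n ∈ hom a a'} → {n : ℕ // n ∈ hom a' a''} → {n : ℕ // n ∈ hom a a''}
  tr_id1 : CompComputes (fun a : A => α a) (fun a => (id1 a).val)
  tr_inv1 : CompComputes
    (fun q : {p : A × A × ℕ // p.2.2 ∈ hom p.1 p.2.1} =>
      Nat.pair (α q.1.1) (Nat.pair (α q.1.2.1) q.1.2.2))
    (fun q => (inv1 q.1.1 q.1.2.1 ⟨q.1.2.2, q.2⟩).val)
  tr_comp1 : CompComputes
    (fun q : {p : A × A × A × ℕ × ℕ //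
        p.2.2.2.1 ∈ hom p.1 p.2.1 ∧ p.2.2.2.2 ∈ hom p.2.1 p.2.2.1} =>
      Nat.pair (α q.1.1) (Nat.pair (α q.1.2.1) (Nat.pair (α q.1.2.2.1)
        (Nat.pair q.1.2.2.2.1 q.1.2.2.2.2))))
    (fun q => (comp1 q.1.1 q.1.2.1 q.1.2.2.1 ⟨q.1.2.2.2.1, q.2.1⟩ ⟨q.1.2.2.2.2, q.2.2⟩).val)
  -- computable structural 2-cells `1 ∘ π ⇒ π`, `π ∘ 1 ⇒ π`, `π⁻¹ ∘ π ⇒ 1`,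
  -- `π ∘ π⁻¹ ⇒ 1`, `(σ ∘ ρ) ∘ π ⇒ σ ∘ (ρ ∘ π)`
  lunit : CompFinds
    (fun q : {p : A × A × ℕ // p.2.2 ∈ hom p.1 p.2.1} =>
      Nat.pair (α q.1.1) (Nat.pair (α q.1.2.1) q.1.2.2))
    (fun q => hom2 q.1.1 q.1.2.1
      (comp1 q.1.1 q.1.2.1 q.1.2.1 ⟨q.1.2.2, q.2⟩ (id1 q.1.2.1)).val q.1.2.2)
  runit : CompFinds
    (fun q : {p : A × A × ℕ // p.2.2 ∈ hom p.1 p.2.1} =>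
      Nat.pair (α q.1.1) (Nat.pair (α q.1.2.1) q.1.2.2))
    (fun q => hom2 q.1.1 q.1.2.1
      (comp1 q.1.1 q.1.1 q.1.2.1 (id1 q.1.1) ⟨q.1.2.2, q.2⟩).val q.1.2.2)
  linv : CompFinds
    (fun q : {p : A × A × ℕ // p.2.2 ∈ hom p.1 p.2.1} =>
      Nat.pair (α q.1.1) (Nat.pair (α q.1.2.1) q.1.2.2))
    (fun q => hom2 q.1.1 q.1.1
      (comp1 q.1.1 q.1.2.1 q.1.1 ⟨q.1.2.2, q.2⟩ (inv1 q.1.1 q.1.2.1 ⟨q.1.2.2, q.2⟩)).val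
      (id1 q.1.1).val)
  rinv : CompFinds
    (fun q : {p : A × A × ℕ // p.2.2 ∈ hom p.1 p.2.1} =>
      Nat.pair (α q.1.1) (Nat.pair (α q.1.2.1) q.1.2.2))
    (fun q => hom2 q.1.2.1 q.1.2.1
      (comp1 q.1.2.1 q.1.1 q.1.2.1 (inv1 q.1.1 q.1.2.1 ⟨q.1.2.2, q.2⟩) ⟨q.1.2.2, q.2⟩).val
      (id1 q.1.2.1).val)
  assoc2 : CompFinds
    (fun q : {p : A × A × A × A × ℕ × ℕ × ℕ //
        p.2.2.2.2.1 ∈ hom p.1 p.2.1 ∧ p.2.2.2.2.2.1 ∈ hom p.2.1 p.2.2.1 ∧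
        p.2.2.2.2.2.2 ∈ hom p.2.2.1 p.2.2.2.1} =>
      Nat.pair (α q.1.1) (Nat.pair (α q.1.2.1) (Nat.pair (α q.1.2.2.1)
        (Nat.pair (α q.1.2.2.2.1) (Nat.pair q.1.2.2.2.2.1
          (Nat.pair q.1.2.2.2.2.2.1 q.1.2.2.2.2.2.2))))))
    (fun q => hom2 q.1.1 q.1.2.2.2.1
      (comp1 q.1.1 q.1.2.2.1 q.1.2.2.2.1
        (comp1 q.1.1 q.1.2.1 q.1.2.2.1 ⟨q.1.2.2.2.2.1, q.2.1⟩ ⟨q.1.2.2.2.2.2.1, q.2.2.1⟩)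
        ⟨q.1.2.2.2.2.2.2, q.2.2.2⟩).val
      (comp1 q.1.1 q.1.2.1 q.1.2.2.2.1 ⟨q.1.2.2.2.2.1, q.2.1⟩
        (comp1 q.1.2.1 q.1.2.2.1 q.1.2.2.2.1 ⟨q.1.2.2.2.2.2.1, q.2.2.1⟩
          ⟨q.1.2.2.2.2.2.2, q.2.2.2⟩)).val)
  -- computable operations on 2-cells: identities, vertical composition, inverses,
  -- horizontal composition
  id2 : CompFinds
    (fun q : {p : A × A × ℕ // p.2.2 ∈ hom p.1 p.2.1} =>
      Nat.pair (α q.1.1) (Nat.pair (α q.1.2.1) q.1.2.2))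
    (fun q => hom2 q.1.1 q.1.2.1 q.1.2.2 q.1.2.2)
  vcomp : CompFinds
    (fun q : {p : A × A × ℕ × ℕ × ℕ × ℕ × ℕ //
        p.2.2.1 ∈ hom p.1 p.2.1 ∧ p.2.2.2.1 ∈ hom p.1 p.2.1 ∧
        p.2.2.2.2.1 ∈ hom p.1 p.2.1 ∧
        p.2.2.2.2.2.1 ∈ hom2 p.1 p.2.1 p.2.2.1 p.2.2.2.1 ∧
        p.2.2.2.2.2.2 ∈ hom2 p.1 p.2.1 p.2.2.2.1 p.2.2.2.2.1} =>
      Nat.pair (α q.1.1) (Nat.pair (α q.1.2.1) (Nat.pair q.1.2.2.1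
        (Nat.pair q.1.2.2.2.1 (Nat.pair q.1.2.2.2.2.1
          (Nat.pair q.1.2.2.2.2.2.1 q.1.2.2.2.2.2.2))))))
    (fun q => hom2 q.1.1 q.1.2.1 q.1.2.2.1 q.1.2.2.2.2.1)
  inv2 : CompFinds
    (fun q : {p : A × A × ℕ × ℕ × ℕ //
        p.2.2.1 ∈ hom p.1 p.2.1 ∧ p.2.2.2.1 ∈ hom p.1 p.2.1 ∧
        p.2.2.2.2 ∈ hom2 p.1 p.2.1 p.2.2.1 p.2.2.2.1} =>
      Nat.pair (α q.1.1) (Nat.pair (α q.1.2.1) (Nat.pair q.1.2.2.1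
        (Nat.pair q.1.2.2.2.1 q.1.2.2.2.2))))
    (fun q => hom2 q.1.1 q.1.2.1 q.1.2.2.2.1 q.1.2.2.1)
  hcomp : CompFinds
    (fun q : {p : A × A × A × ℕ × ℕ × ℕ × ℕ × ℕ × ℕ //
        p.2.2.2.1 ∈ hom p.1 p.2.1 ∧ p.2.2.2.2.1 ∈ hom p.1 p.2.1 ∧
        p.2.2.2.2.2.1 ∈ hom p.2.1 p.2.2.1 ∧ p.2.2.2.2.2.2.1 ∈ hom p.2.1 p.2.2.1 ∧
        p.2.2.2.2.2.2.2.1 ∈ hom2 p.1 p.2.1 p.2.2.2.1 p.2.2.2.2.1 ∧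
        p.2.2.2.2.2.2.2.2 ∈ hom2 p.2.1 p.2.2.1 p.2.2.2.2.2.1 p.2.2.2.2.2.2.1} =>
      Nat.pair (α q.1.1) (Nat.pair (α q.1.2.1) (Nat.pair (α q.1.2.2.1)
        (Nat.pair q.1.2.2.2.1 (Nat.pair q.1.2.2.2.2.1 (Nat.pair q.1.2.2.2.2.2.1
          (Nat.pair q.1.2.2.2.2.2.2.1
            (Nat.pair q.1.2.2.2.2.2.2.2.1 q.1.2.2.2.2.2.2.2.2))))))))
    (fun q => hom2 q.1.1 q.1.2.2.1
      (comp1 q.1.1 q.1.2.1 q.1.2.2.1 ⟨q.1.2.2.2.1, q.2.1⟩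
        ⟨q.1.2.2.2.2.2.1, q.2.2.2.1⟩).val
      (comp1 q.1.1 q.1.2.1 q.1.2.2.1 ⟨q.1.2.2.2.2.1, q.2.2.1⟩
        ⟨q.1.2.2.2.2.2.2.1, q.2.2.2.2.1⟩).val)

/-- The 1-cells of an object of `EFF₁`. -/
abbrev Eff1Obj.Cell1 (A : Eff1Obj) (a a' : A.A) : Type := {n : ℕ // n ∈ A.hom a a'}

/-- The 2-cells of an object of `EFF₁` between parallel 1-cells. -/
abbrev Eff1Obj.Cell2 (A : Eff1Obj) {a a' : A.A} (π π' : A.Cell1 a a') : Type :=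
  {n : ℕ // n ∈ A.hom2 a a' π.val π'.val}

end EffPaper
namespace EffPaper
open CategoryTheory

/-- A morphism of `EFF₁`: computably tracked functions on 0-, 1- and 2-cells such
that 2-cells `f(1_b) ⇒ 1_{fb}` and `f(ρ∘π) ⇒ fρ ∘ fπ` can be computed from the
relevant data. -/
structure Eff1Hom (B A : Eff1Obj) : Type where
  f0 : B.A → A.A
  f1 : ∀ b b' : B.A, B.Cell1 b b' → A.Cell1 (f0 b) (f0 b')
  f2 : ∀ (b b' : B.A) (π π' : B.Cell1 b b'),
    B.Cell2 π π' → A.Cell2 (f1 b b' π) (f1 b b' π')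
  tr0 : CompComputes (fun b : B.A => B.α b) (fun b => A.α (f0 b))
  tr1 : CompComputes
    (fun x : (b : B.A) × (b' : B.A) × B.Cell1 b b' =>
      Nat.pair (B.α x.1) (Nat.pair (B.α x.2.1) x.2.2.val))
    (fun x => (f1 x.1 x.2.1 x.2.2).val)
  tr2 : CompComputes
    (fun x : (b : B.A) × (b' : B.A) × (π : B.Cell1 b b') ×
        (π' : B.Cell1 b b') × B.Cell2 π π' =>
      Nat.pair (B.α x.1) (Nat.pair (B.α x.2.1)
        (Nat.pair x.2.2.1.val (Nat.pair x.2.2.2.1.val x.2.2.2.2.val))))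
    (fun x => (f2 x.1 x.2.1 x.2.2.1 x.2.2.2.1 x.2.2.2.2).val)
  fid : CompFinds (fun b : B.A => B.α b)
    (fun b => A.hom2 (f0 b) (f0 b) (f1 b b (B.id1 b)).val (A.id1 (f0 b)).val)
  fcomp : CompFinds
    (fun x : (b : B.A) × (b' : B.A) × (b'' : B.A) ×
        (B.Cell1 b b' × B.Cell1 b' b'') =>
      Nat.pair (B.α x.1) (Nat.pair (B.α x.2.1) (Nat.pair (B.α x.2.2.1)
        (Nat.pair x.2.2.2.1.val x.2.2.2.2.val))))
    (fun x => A.hom2 (f0 x.1) (f0 x.2.2.1)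
      (f1 x.1 x.2.2.1 (B.comp1 x.1 x.2.1 x.2.2.1 x.2.2.2.1 x.2.2.2.2)).val
      (A.comp1 (f0 x.1) (f0 x.2.1) (f0 x.2.2.1)
        (f1 x.1 x.2.1 x.2.2.2.1) (f1 x.2.1 x.2.2.1 x.2.2.2.2)).val)

namespace Eff1

variable {X Y Z : Eff1Obj}

/-- The identity morphism of `EFF₁`. -/
def idHom (A : Eff1Obj) : Eff1Hom A A where
  f0 := fun a => a
  f1 := fun _ _ π => π
  f2 := fun _ _ _ _ n => n
  tr0 := CompComputes.id _
  tr1 := (CompComputes.projR _ _).comp (CompComputes.projR _ _)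
  tr2 := (CompComputes.projR _ _).comp ((CompComputes.projR _ _).comp
    ((CompComputes.projR _ _).comp (CompComputes.projR _ _)))
  fid := by
    have hm : ∀ a : A.A, ((A.id1 a).val ∈ A.hom a a) := fun a => (A.id1 a).2
    refine A.id2.via (fun a : A.A => ⟨⟨a, a, (A.id1 a).val⟩, hm a⟩) ?_
    exact (CompComputes.id _).pair ((CompComputes.id _).pair A.tr_id1)
  fcomp := by
    set T := (b : A.A) × (b' : A.A) × (b'' : A.A) × (A.Cell1 b b' × A.Cell1 b' b'')
    set cmp : ∀ x : T, A.Cell1 x.1 x.2.2.1 :=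
      fun x => A.comp1 x.1 x.2.1 x.2.2.1 x.2.2.2.1 x.2.2.2.2 with hcmp
    let e' : ∀ x : T, {p : A.A × A.A × A.A × ℕ × ℕ //
        p.2.2.2.1 ∈ A.hom p.1 p.2.1 ∧ p.2.2.2.2 ∈ A.hom p.2.1 p.2.2.1} :=
      fun x => ⟨⟨x.1, x.2.1, x.2.2.1, x.2.2.2.1.val, x.2.2.2.2.val⟩,
        x.2.2.2.1.2, x.2.2.2.2.2⟩
    have ccmp : CompComputes
        (fun x : T => Nat.pair (A.α x.1) (Nat.pair (A.α x.2.1) (Nat.pair (A.α x.2.2.1)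
          (Nat.pair x.2.2.2.1.val x.2.2.2.2.val))))
        (fun x => (cmp x).val) := A.tr_comp1.precomp e'
    refine A.id2.via (fun x : T => ⟨⟨x.1, x.2.2.1, (cmp x).val⟩, (cmp x).2⟩) ?_
    refine (CompComputes.projL _ _).pair (CompComputes.pair ?_ ccmp)
    exact (CompComputes.projL _ _).comp
      ((CompComputes.projR _ _).comp (CompComputes.projR _ _))

end Eff1
end EffPaper
namespace EffPaper
open CategoryTheory
namespace Eff1

variable {X Y Z : Eff1Obj}

/-- Composition of morphisms in `EFF₁`. -/
def compHom (f : Eff1Hom X Y) (g : Eff1Hom Y Z) : Eff1Hom X Z where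
  f0 := fun b => g.f0 (f.f0 b)
  f1 := fun b b' π => g.f1 _ _ (f.f1 b b' π)
  f2 := fun b b' π π' n => g.f2 _ _ _ _ (f.f2 b b' π π' n)
  tr0 := (g.tr0.precomp f.f0).comp f.tr0
  tr1 := by
    set T := (b : X.A) × (b' : X.A) × X.Cell1 b b' with hT
    have cb : CompComputes
        (fun x : T => Nat.pair (X.α x.1) (Nat.pair (X.α x.2.1) x.2.2.val))
        (fun x => X.α x.1) := CompComputes.projL _ _
    have cb' : CompComputes
        (fun x : T => Nat.pair (X.α x.1) (Nat.pair (X.α x.2.1) x.2.2.val))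
        (fun x => X.α x.2.1) :=
      (CompComputes.projL _ _).comp (CompComputes.projR _ _)
    refine (g.tr1.precomp (fun x : T =>
      (⟨f.f0 x.1, f.f0 x.2.1, f.f1 x.1 x.2.1 x.2.2⟩ :
        (b : Y.A) × (b' : Y.A) × Y.Cell1 b b'))).comp ?_
    refine CompComputes.pair ?_ (CompComputes.pair ?_ f.tr1)
    · exact (f.tr0.precomp (fun x : T => x.1)).comp cb
    · exact (f.tr0.precomp (fun x : T => x.2.1)).comp cb'
  tr2 := by
    set T := (b : X.A) × (b' : X.A) × (π : X.Cell1 b b') ×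
      (π' : X.Cell1 b b') × X.Cell2 π π' with hT
    set I : T → ℕ := fun x => Nat.pair (X.α x.1) (Nat.pair (X.α x.2.1)
      (Nat.pair x.2.2.1.val (Nat.pair x.2.2.2.1.val x.2.2.2.2.val))) with hI
    have cb : CompComputes I (fun x => X.α x.1) := CompComputes.projL _ _
    have cb' : CompComputes I (fun x => X.α x.2.1) :=
      (CompComputes.projL _ _).comp (CompComputes.projR _ _)
    have cπ : CompComputes I (fun x => x.2.2.1.val) :=
      (CompComputes.projL _ _).comp
        ((CompComputes.projR _ _).comp (CompComputes.projR _ _))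
    have cπ' : CompComputes I (fun x => x.2.2.2.1.val) :=
      (CompComputes.projL _ _).comp ((CompComputes.projR _ _).comp
        ((CompComputes.projR _ _).comp (CompComputes.projR _ _)))
    have cYb : CompComputes I (fun x => Y.α (f.f0 x.1)) :=
      (f.tr0.precomp (fun x : T => x.1)).comp cb
    have cYb' : CompComputes I (fun x => Y.α (f.f0 x.2.1)) :=
      (f.tr0.precomp (fun x : T => x.2.1)).comp cb'
    have cf1π : CompComputes I (fun x => (f.f1 x.1 x.2.1 x.2.2.1).val) :=
      (f.tr1.precomp (fun x : T =>
        (⟨x.1, x.2.1, x.2.2.1⟩ : (b : X.A) × (b' : X.A) × X.Cell1 b b'))).comp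
        (cb.pair (cb'.pair cπ))
    have cf1π' : CompComputes I (fun x => (f.f1 x.1 x.2.1 x.2.2.2.1).val) :=
      (f.tr1.precomp (fun x : T =>
        (⟨x.1, x.2.1, x.2.2.2.1⟩ : (b : X.A) × (b' : X.A) × X.Cell1 b b'))).comp
        (cb.pair (cb'.pair cπ'))
    refine (g.tr2.precomp (fun x : T =>
      (⟨f.f0 x.1, f.f0 x.2.1, f.f1 x.1 x.2.1 x.2.2.1, f.f1 x.1 x.2.1 x.2.2.2.1,
        f.f2 x.1 x.2.1 x.2.2.1 x.2.2.2.1 x.2.2.2.2⟩ :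
        (b : Y.A) × (b' : Y.A) × (π : Y.Cell1 b b') ×
          (π' : Y.Cell1 b b') × Y.Cell2 π π'))).comp ?_
    exact cYb.pair (cYb'.pair (cf1π.pair (cf1π'.pair f.tr2)))
  fid := by
    obtain ⟨uf, ufmem, ufcc⟩ := f.fid.toComputes
    obtain ⟨vg, vgmem, vgcc⟩ := g.fid.toComputes
    have cYα : CompComputes (fun b : X.A => X.α b) (fun b => Y.α (f.f0 b)) := f.tr0
    have cZα : CompComputes (fun b : X.A => X.α b)
        (fun b => Z.α (g.f0 (f.f0 b))) := (g.tr0.precomp f.f0).comp f.tr0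
    have cf1id : CompComputes (fun b : X.A => X.α b)
        (fun b => (f.f1 b b (X.id1 b)).val) :=
      (f.tr1.precomp (fun b : X.A =>
        (⟨b, b, X.id1 b⟩ : (b : X.A) × (b' : X.A) × X.Cell1 b b'))).comp
        ((CompComputes.id _).pair ((CompComputes.id _).pair X.tr_id1))
    have cYid : CompComputes (fun b : X.A => X.α b)
        (fun b => (Y.id1 (f.f0 b)).val) := (Y.tr_id1.precomp f.f0).comp f.tr0
    have cgu : CompComputes (fun b : X.A => X.α b)
        (fun b => (g.f2 (f.f0 b) (f.f0 b) (f.f1 b b (X.id1 b)) (Y.id1 (f.f0 b))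
          ⟨uf b, ufmem b⟩).val) :=
      (g.tr2.precomp (fun b : X.A =>
        (⟨f.f0 b, f.f0 b, f.f1 b b (X.id1 b), Y.id1 (f.f0 b), ⟨uf b, ufmem b⟩⟩ :
          (a : Y.A) × (a' : Y.A) × (π : Y.Cell1 a a') ×
            (π' : Y.Cell1 a a') × Y.Cell2 π π'))).comp
        (cYα.pair (cYα.pair (cf1id.pair (cYid.pair ufcc))))
    have cgf1id : CompComputes (fun b : X.A => X.α b)
        (fun b => (g.f1 (f.f0 b) (f.f0 b) (f.f1 b b (X.id1 b))).val) :=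
      (g.tr1.precomp (fun b : X.A =>
        (⟨f.f0 b, f.f0 b, f.f1 b b (X.id1 b)⟩ :
          (a : Y.A) × (a' : Y.A) × Y.Cell1 a a'))).comp
        (cYα.pair (cYα.pair cf1id))
    have cgYid : CompComputes (fun b : X.A => X.α b)
        (fun b => (g.f1 (f.f0 b) (f.f0 b) (Y.id1 (f.f0 b))).val) :=
      (g.tr1.precomp (fun b : X.A =>
        (⟨f.f0 b, f.f0 b, Y.id1 (f.f0 b)⟩ :
          (a : Y.A) × (a' : Y.A) × Y.Cell1 a a'))).comp
        (cYα.pair (cYα.pair cYid))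
    have cZid : CompComputes (fun b : X.A => X.α b)
        (fun b => (Z.id1 (g.f0 (f.f0 b))).val) :=
      (Z.tr_id1.precomp (fun b : X.A => g.f0 (f.f0 b))).comp cZα
    have cvg : CompComputes (fun b : X.A => X.α b) (fun b => vg (f.f0 b)) :=
      (vgcc.precomp f.f0).comp f.tr0
    exact Z.vcomp.via
      (fun b : X.A =>
        ⟨⟨g.f0 (f.f0 b), g.f0 (f.f0 b),
          (g.f1 (f.f0 b) (f.f0 b) (f.f1 b b (X.id1 b))).val,
          (g.f1 (f.f0 b) (f.f0 b) (Y.id1 (f.f0 b))).val,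
          (Z.id1 (g.f0 (f.f0 b))).val,
          (g.f2 (f.f0 b) (f.f0 b) (f.f1 b b (X.id1 b)) (Y.id1 (f.f0 b))
            ⟨uf b, ufmem b⟩).val,
          vg (f.f0 b)⟩,
          (g.f1 _ _ _).2, (g.f1 _ _ _).2, (Z.id1 _).2,
          (g.f2 _ _ _ _ _).2, vgmem (f.f0 b)⟩)
      (cZα.pair (cZα.pair (cgf1id.pair (cgYid.pair (cZid.pair (cgu.pair cvg))))))
  fcomp := by
    set T := (b : X.A) × (b' : X.A) × (b'' : X.A) ×
      (X.Cell1 b b' × X.Cell1 b' b'') with hT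
    set I : T → ℕ := fun x => Nat.pair (X.α x.1) (Nat.pair (X.α x.2.1)
      (Nat.pair (X.α x.2.2.1) (Nat.pair x.2.2.2.1.val x.2.2.2.2.val))) with hI
    let cmp : ∀ x : T, X.Cell1 x.1 x.2.2.1 :=
      fun x => X.comp1 x.1 x.2.1 x.2.2.1 x.2.2.2.1 x.2.2.2.2
    obtain ⟨uc, ucmem, uccc⟩ := f.fcomp.toComputes
    obtain ⟨vc, vcmem, vccc⟩ := g.fcomp.toComputes
    have cb : CompComputes I (fun x => X.α x.1) := CompComputes.projL _ _
    have cb' : CompComputes I (fun x => X.α x.2.1) :=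
      (CompComputes.projL _ _).comp (CompComputes.projR _ _)
    have cb'' : CompComputes I (fun x => X.α x.2.2.1) :=
      (CompComputes.projL _ _).comp
        ((CompComputes.projR _ _).comp (CompComputes.projR _ _))
    have cπ : CompComputes I (fun x => x.2.2.2.1.val) :=
      (CompComputes.projL _ _).comp ((CompComputes.projR _ _).comp
        ((CompComputes.projR _ _).comp (CompComputes.projR _ _)))
    have cρ : CompComputes I (fun x => x.2.2.2.2.val) :=
      (CompComputes.projR _ _).comp ((CompComputes.projR _ _).comp
        ((CompComputes.projR _ _).comp (CompComputes.projR _ _)))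
    have cYb : CompComputes I (fun x => Y.α (f.f0 x.1)) :=
      (f.tr0.precomp (fun x : T => x.1)).comp cb
    have cYb' : CompComputes I (fun x => Y.α (f.f0 x.2.1)) :=
      (f.tr0.precomp (fun x : T => x.2.1)).comp cb'
    have cYb'' : CompComputes I (fun x => Y.α (f.f0 x.2.2.1)) :=
      (f.tr0.precomp (fun x : T => x.2.2.1)).comp cb''
    have cZb : CompComputes I (fun x => Z.α (g.f0 (f.f0 x.1))) :=
      (g.tr0.precomp (fun x : T => f.f0 x.1)).comp cYb
    have cZb' : CompComputes I (fun x => Z.α (g.f0 (f.f0 x.2.1))) :=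
      (g.tr0.precomp (fun x : T => f.f0 x.2.1)).comp cYb'
    have cZb'' : CompComputes I (fun x => Z.α (g.f0 (f.f0 x.2.2.1))) :=
      (g.tr0.precomp (fun x : T => f.f0 x.2.2.1)).comp cYb''
    have cXcmp : CompComputes I (fun x => (cmp x).val) :=
      X.tr_comp1.precomp (fun x : T =>
        (⟨⟨x.1, x.2.1, x.2.2.1, x.2.2.2.1.val, x.2.2.2.2.val⟩,
          x.2.2.2.1.2, x.2.2.2.2.2⟩ :
          {p : X.A × X.A × X.A × ℕ × ℕ //
            p.2.2.2.1 ∈ X.hom p.1 p.2.1 ∧ p.2.2.2.2 ∈ X.hom p.2.1 p.2.2.1}))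
    have cf1π : CompComputes I (fun x => (f.f1 x.1 x.2.1 x.2.2.2.1).val) :=
      (f.tr1.precomp (fun x : T =>
        (⟨x.1, x.2.1, x.2.2.2.1⟩ : (b : X.A) × (b' : X.A) × X.Cell1 b b'))).comp
        (cb.pair (cb'.pair cπ))
    have cf1ρ : CompComputes I (fun x => (f.f1 x.2.1 x.2.2.1 x.2.2.2.2).val) :=
      (f.tr1.precomp (fun x : T =>
        (⟨x.2.1, x.2.2.1, x.2.2.2.2⟩ : (b : X.A) × (b' : X.A) × X.Cell1 b b'))).comp
        (cb'.pair (cb''.pair cρ))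
    have cf1cmp : CompComputes I (fun x => (f.f1 x.1 x.2.2.1 (cmp x)).val) :=
      (f.tr1.precomp (fun x : T =>
        (⟨x.1, x.2.2.1, cmp x⟩ : (b : X.A) × (b' : X.A) × X.Cell1 b b'))).comp
        (cb.pair (cb''.pair cXcmp))
    have cYcmp : CompComputes I (fun x => (Y.comp1 (f.f0 x.1) (f.f0 x.2.1)
        (f.f0 x.2.2.1) (f.f1 x.1 x.2.1 x.2.2.2.1)
        (f.f1 x.2.1 x.2.2.1 x.2.2.2.2)).val) :=
      (Y.tr_comp1.precomp (fun x : T =>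
        (⟨⟨f.f0 x.1, f.f0 x.2.1, f.f0 x.2.2.1, (f.f1 x.1 x.2.1 x.2.2.2.1).val,
          (f.f1 x.2.1 x.2.2.1 x.2.2.2.2).val⟩,
          (f.f1 _ _ _).2, (f.f1 _ _ _).2⟩ :
          {p : Y.A × Y.A × Y.A × ℕ × ℕ //
            p.2.2.2.1 ∈ Y.hom p.1 p.2.1 ∧ p.2.2.2.2 ∈ Y.hom p.2.1 p.2.2.1}))).comp
        (cYb.pair (cYb'.pair (cYb''.pair (cf1π.pair cf1ρ))))
    have cguc : CompComputes I
        (fun x => (g.f2 (f.f0 x.1) (f.f0 x.2.2.1) (f.f1 x.1 x.2.2.1 (cmp x))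
          (Y.comp1 (f.f0 x.1) (f.f0 x.2.1) (f.f0 x.2.2.1)
            (f.f1 x.1 x.2.1 x.2.2.2.1) (f.f1 x.2.1 x.2.2.1 x.2.2.2.2))
          ⟨uc x, ucmem x⟩).val) :=
      (g.tr2.precomp (fun x : T =>
        (⟨f.f0 x.1, f.f0 x.2.2.1, f.f1 x.1 x.2.2.1 (cmp x),
          Y.comp1 (f.f0 x.1) (f.f0 x.2.1) (f.f0 x.2.2.1)
            (f.f1 x.1 x.2.1 x.2.2.2.1) (f.f1 x.2.1 x.2.2.1 x.2.2.2.2),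
          ⟨uc x, ucmem x⟩⟩ :
          (a : Y.A) × (a' : Y.A) × (π : Y.Cell1 a a') ×
            (π' : Y.Cell1 a a') × Y.Cell2 π π'))).comp
        (cYb.pair (cYb''.pair (cf1cmp.pair (cYcmp.pair uccc))))
    set eg : T → ((b : Y.A) × (b' : Y.A) × (b'' : Y.A) ×
        (Y.Cell1 b b' × Y.Cell1 b' b'')) :=
      fun x => ⟨f.f0 x.1, f.f0 x.2.1, f.f0 x.2.2.1,
        (f.f1 x.1 x.2.1 x.2.2.2.1, f.f1 x.2.1 x.2.2.1 x.2.2.2.2)⟩ with heg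
    have cvc : CompComputes I (fun x => vc (eg x)) :=
      (vccc.precomp eg).comp
        (cYb.pair (cYb'.pair (cYb''.pair (cf1π.pair cf1ρ))))
    have cgf1cmp : CompComputes I
        (fun x => (g.f1 (f.f0 x.1) (f.f0 x.2.2.1) (f.f1 x.1 x.2.2.1 (cmp x))).val) :=
      (g.tr1.precomp (fun x : T =>
        (⟨f.f0 x.1, f.f0 x.2.2.1, f.f1 x.1 x.2.2.1 (cmp x)⟩ :
          (a : Y.A) × (a' : Y.A) × Y.Cell1 a a'))).comp
        (cYb.pair (cYb''.pair cf1cmp))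
    have cgYcmp : CompComputes I
        (fun x => (g.f1 (f.f0 x.1) (f.f0 x.2.2.1)
          (Y.comp1 (f.f0 x.1) (f.f0 x.2.1) (f.f0 x.2.2.1)
            (f.f1 x.1 x.2.1 x.2.2.2.1) (f.f1 x.2.1 x.2.2.1 x.2.2.2.2))).val) :=
      (g.tr1.precomp (fun x : T =>
        (⟨f.f0 x.1, f.f0 x.2.2.1,
          Y.comp1 (f.f0 x.1) (f.f0 x.2.1) (f.f0 x.2.2.1)
            (f.f1 x.1 x.2.1 x.2.2.2.1) (f.f1 x.2.1 x.2.2.1 x.2.2.2.2)⟩ :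
          (a : Y.A) × (a' : Y.A) × Y.Cell1 a a'))).comp
        (cYb.pair (cYb''.pair cYcmp))
    have cgf1π : CompComputes I
        (fun x => (g.f1 (f.f0 x.1) (f.f0 x.2.1) (f.f1 x.1 x.2.1 x.2.2.2.1)).val) :=
      (g.tr1.precomp (fun x : T =>
        (⟨f.f0 x.1, f.f0 x.2.1, f.f1 x.1 x.2.1 x.2.2.2.1⟩ :
          (a : Y.A) × (a' : Y.A) × Y.Cell1 a a'))).comp
        (cYb.pair (cYb'.pair cf1π))
    have cgf1ρ : CompComputes I
        (fun x => (g.f1 (f.f0 x.2.1) (f.f0 x.2.2.1)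
          (f.f1 x.2.1 x.2.2.1 x.2.2.2.2)).val) :=
      (g.tr1.precomp (fun x : T =>
        (⟨f.f0 x.2.1, f.f0 x.2.2.1, f.f1 x.2.1 x.2.2.1 x.2.2.2.2⟩ :
          (a : Y.A) × (a' : Y.A) × Y.Cell1 a a'))).comp
        (cYb'.pair (cYb''.pair cf1ρ))
    have cZcmp : CompComputes I
        (fun x => (Z.comp1 (g.f0 (f.f0 x.1)) (g.f0 (f.f0 x.2.1)) (g.f0 (f.f0 x.2.2.1))
          (g.f1 _ _ (f.f1 x.1 x.2.1 x.2.2.2.1))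
          (g.f1 _ _ (f.f1 x.2.1 x.2.2.1 x.2.2.2.2))).val) :=
      (Z.tr_comp1.precomp (fun x : T =>
        (⟨⟨g.f0 (f.f0 x.1), g.f0 (f.f0 x.2.1), g.f0 (f.f0 x.2.2.1),
          (g.f1 _ _ (f.f1 x.1 x.2.1 x.2.2.2.1)).val,
          (g.f1 _ _ (f.f1 x.2.1 x.2.2.1 x.2.2.2.2)).val⟩,
          (g.f1 _ _ _).2, (g.f1 _ _ _).2⟩ :
          {p : Z.A × Z.A × Z.A × ℕ × ℕ //
            p.2.2.2.1 ∈ Z.hom p.1 p.2.1 ∧ p.2.2.2.2 ∈ Z.hom p.2.1 p.2.2.1}))).comp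
        (cZb.pair (cZb'.pair (cZb''.pair (cgf1π.pair cgf1ρ))))
    exact Z.vcomp.via
      (fun x : T =>
        ⟨⟨g.f0 (f.f0 x.1), g.f0 (f.f0 x.2.2.1),
          (g.f1 _ _ (f.f1 x.1 x.2.2.1 (cmp x))).val,
          (g.f1 _ _ (Y.comp1 (f.f0 x.1) (f.f0 x.2.1) (f.f0 x.2.2.1)
            (f.f1 x.1 x.2.1 x.2.2.2.1) (f.f1 x.2.1 x.2.2.1 x.2.2.2.2))).val,
          (Z.comp1 (g.f0 (f.f0 x.1)) (g.f0 (f.f0 x.2.1)) (g.f0 (f.f0 x.2.2.1))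
            (g.f1 _ _ (f.f1 x.1 x.2.1 x.2.2.2.1))
            (g.f1 _ _ (f.f1 x.2.1 x.2.2.1 x.2.2.2.2))).val,
          (g.f2 (f.f0 x.1) (f.f0 x.2.2.1) (f.f1 x.1 x.2.2.1 (cmp x))
            (Y.comp1 (f.f0 x.1) (f.f0 x.2.1) (f.f0 x.2.2.1)
              (f.f1 x.1 x.2.1 x.2.2.2.1) (f.f1 x.2.1 x.2.2.1 x.2.2.2.2))
            ⟨uc x, ucmem x⟩).val,
          vc (eg x)⟩,
          (g.f1 _ _ _).2, (g.f1 _ _ _).2, (Z.comp1 _ _ _ _ _).2,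
          (g.f2 _ _ _ _ _).2, vcmem (eg x)⟩)
      (cZb.pair (cZb''.pair (cgf1cmp.pair (cgYcmp.pair
        (cZcmp.pair (cguc.pair cvc))))))

end Eff1
end EffPaper
namespace EffPaper
open CategoryTheory

instance : Category.{0} Eff1Obj where
  Hom B A := Eff1Hom B A
  id A := Eff1.idHom A
  comp f g := Eff1.compHom f g

end EffPaper
namespace EffPaper
open CategoryTheory

/-! ### Homotopies, equivalences and fibrations in `EFF₁`. -/

/-- A homotopy between two morphisms of `EFF₁`: computable functions assigning to
each 0-cell `b` a 1-cell `H₁ b : f b → g b` and to each 1-cell `π : b → b'` a 2-cell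
`H₂ π : H₁(b') ∘ f(π) ⇒ g(π) ∘ H₁(b)` filling the square. -/
structure Eff1Htpy {B A : Eff1Obj} (f g : Eff1Hom B A) : Type where
  H1 : ∀ b : B.A, A.Cell1 (f.f0 b) (g.f0 b)
  H2 : ∀ (b b' : B.A) (π : B.Cell1 b b'),
    {m : ℕ // m ∈ A.hom2 (f.f0 b) (g.f0 b')
      (A.comp1 (f.f0 b) (f.f0 b') (g.f0 b') (f.f1 b b' π) (H1 b')).val
      (A.comp1 (f.f0 b) (g.f0 b) (g.f0 b') (H1 b) (g.f1 b b' π)).val}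
  trH1 : CompComputes (fun b : B.A => B.α b) (fun b => (H1 b).val)
  trH2 : CompComputes
    (fun x : (b : B.A) × (b' : B.A) × B.Cell1 b b' =>
      Nat.pair (B.α x.1) (Nat.pair (B.α x.2.1) x.2.2.val))
    (fun x => (H2 x.1 x.2.1 x.2.2).val)

/-- Two morphisms of `EFF₁` are homotopic if there is a homotopy between them. -/
def Eff1Homotopic {B A : Eff1Obj} (f g : Eff1Hom B A) : Prop :=
  Nonempty (Eff1Htpy f g)

/-- A morphism of `EFF₁` is a (homotopy) equivalence if it has a homotopy inverse. -/
def Eff1Eqv {B A : Eff1Obj} (f : B ⟶ A) : Prop :=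
  ∃ g : A ⟶ B, Eff1Homotopic (f ≫ g) (𝟙 B) ∧ Eff1Homotopic (g ≫ f) (𝟙 A)

/-- A 2-homotopy between homotopies `H, K : f ≃ g`: a computable function assigning
to each `b` a 2-cell between `H₁ b` and `K₁ b`. -/
def Eff1TwoHtpy {B A : Eff1Obj} {f g : Eff1Hom B A} (H K : Eff1Htpy f g) : Prop :=
  ∃ M : B.A → ℕ,
    (∀ b, M b ∈ A.hom2 (f.f0 b) (g.f0 b) (H.H1 b).val (K.H1 b).val) ∧
    CompComputes (fun b : B.A => B.α b) M

/-- A morphism of `EFF₁` is a fibration: (i) 1-cells downstairs lift computably;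
(ii) 2-cells `n : f(ρ) ⇒ π'` lift to 2-cells `m : ρ ⇒ ρ'` with `f(ρ') = π'`,
`f(m) = n`, computably; (iii) 2-cells between images of parallel 1-cells lift
computably. -/
def Eff1Fib {B A : Eff1Obj} (f : B ⟶ A) : Prop :=
  (∃ φ ψ : ℕ →. ℕ, Partrec φ ∧ Partrec ψ ∧
    ∀ (b : B.A) (a : A.A) (π : ℕ), π ∈ A.hom (f.f0 b) a →
      ∃ (b' : B.A) (ρ : B.Cell1 b b'), f.f0 b' = a ∧ (f.f1 b b' ρ).val = π ∧
        B.α b' ∈ φ (Nat.pair (B.α b) (Nat.pair (A.α a) π)) ∧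
        ρ.val ∈ ψ (Nat.pair (B.α b) (Nat.pair (A.α a) π))) ∧
  (∃ χ ω : ℕ →. ℕ, Partrec χ ∧ Partrec ω ∧
    ∀ (b b' : B.A) (π π' : ℕ), π ∈ A.hom (f.f0 b) (f.f0 b') →
      π' ∈ A.hom (f.f0 b) (f.f0 b') →
      ∀ n : ℕ, n ∈ A.hom2 (f.f0 b) (f.f0 b') π π' →
      ∀ ρ : B.Cell1 b b', (f.f1 b b' ρ).val = π →
      ∃ (ρ' : B.Cell1 b b') (m : B.Cell2 ρ ρ'),
        (f.f1 b b' ρ').val = π' ∧ (f.f2 b b' ρ ρ' m).val = n ∧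
        ρ'.val ∈ χ (Nat.pair (B.α b) (Nat.pair (B.α b')
          (Nat.pair π (Nat.pair π' (Nat.pair n ρ.val))))) ∧
        m.val ∈ ω (Nat.pair (B.α b) (Nat.pair (B.α b')
          (Nat.pair π (Nat.pair π' (Nat.pair n ρ.val)))))) ∧
  (∃ θ : ℕ →. ℕ, Partrec θ ∧
    ∀ (b b' : B.A) (π π' : B.Cell1 b b') (m : B.Cell2 π π') (n : ℕ),
      n ∈ A.hom2 (f.f0 b) (f.f0 b') (f.f1 b b' π).val (f.f1 b b' π').val →
      ∃ m' : B.Cell2 π π', (f.f2 b b' π π' m').val = n ∧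
        m'.val ∈ θ (Nat.pair (B.α b) (Nat.pair (B.α b')
          (Nat.pair π.val (Nat.pair π'.val (Nat.pair m.val n))))))

/-- The path structure on `EFF₁`: fibrations and (homotopy) equivalences. -/
def Eff1PS : PathStruct Eff1Obj where
  Fib := fun {_ _} f => Eff1Fib f
  Eqv := fun {_ _} f => Eff1Eqv f

/-- A fibration in `EFF₁` is a standard discrete fibration if elements of the domain
are determined by their image and their realizer. -/
def Eff1StdDisc {B A : Eff1Obj} (f : B ⟶ A) : Prop :=
  Eff1Fib f ∧ ∀ b b' : B.A, f.f0 b = f.f0 b' → B.α b = B.α b' → b = b'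

/-- A fibration in `EFF₁` is discrete if it can be written as a standard discrete
fibration after an equivalence. -/
def Eff1Disc {B A : Eff1Obj} (f : B ⟶ A) : Prop :=
  Eff1Fib f ∧ ∃ (B' : Eff1Obj) (w : B ⟶ B') (g : B' ⟶ A),
    Eff1Eqv w ∧ Eff1StdDisc g ∧ w ≫ g = f

end EffPaper
namespace EffPaper
open CategoryTheory

/-! ### A DSL of computably tracked families of cells. -/

section DSL

/-- A tracked family of 0-cells of `A`, indexed by `X` with input encoding `I`. -/
structure T0 (A : Eff1Obj) {X : Type} (I : X → ℕ) where
  o : X → A.A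
  tr : CompComputes I fun x => A.α (o x)

/-- A tracked family of 1-cells between two tracked families of 0-cells. -/
structure T1 {A : Eff1Obj} {X : Type} {I : X → ℕ} (a b : T0 A I) : Type where
  c : ∀ x, A.Cell1 (a.o x) (b.o x)
  tr : CompComputes I fun x => (c x).val

/-- A tracked family of 2-cells between two parallel tracked families of 1-cells. -/
structure T2 {A : Eff1Obj} {X : Type} {I : X → ℕ} {a b : T0 A I} (p q : T1 a b) :
    Type where
  c : ∀ x, A.Cell2 (p.c x) (q.c x)
  tr : CompComputes I fun x => (c x).val

variable {A B C : Eff1Obj} {X : Type} {Y : Type} {I : X → ℕ} {J : Y → ℕ}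

namespace T0

def pull (a : T0 A I) (e : Y → X) (h : CompComputes J fun y => I (e y)) : T0 A J :=
  ⟨fun y => a.o (e y), (a.tr.precomp e).comp h⟩

def map (a : T0 B I) (F : Eff1Hom B A) : T0 A I :=
  ⟨fun x => F.f0 (a.o x), (F.tr0.precomp fun x => a.o x).comp a.tr⟩

end T0

namespace T1

def idc (a : T0 A I) : T1 a a :=
  ⟨fun x => A.id1 (a.o x), (A.tr_id1.precomp fun x => a.o x).comp a.tr⟩

def comp {a b c : T0 A I} (p : T1 a b) (q : T1 b c) : T1 a c :=
  ⟨fun x => A.comp1 _ _ _ (p.c x) (q.c x),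
    (A.tr_comp1.precomp (fun x =>
      ⟨⟨a.o x, b.o x, c.o x, (p.c x).val, (q.c x).val⟩, (p.c x).2, (q.c x).2⟩)).comp
      (a.tr.pair (b.tr.pair (c.tr.pair (p.tr.pair q.tr))))⟩

def inv {a b : T0 A I} (p : T1 a b) : T1 b a :=
  ⟨fun x => A.inv1 _ _ (p.c x),
    (A.tr_inv1.precomp (fun x =>
      ⟨⟨a.o x, b.o x, (p.c x).val⟩, (p.c x).2⟩)).comp
      (a.tr.pair (b.tr.pair p.tr))⟩

def pull {a b : T0 A I} (p : T1 a b) (e : Y → X)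
    (h : CompComputes J fun y => I (e y)) : T1 (a.pull e h) (b.pull e h) :=
  ⟨fun y => p.c (e y), (p.tr.precomp e).comp h⟩

def map {a b : T0 B I} (p : T1 a b) (F : Eff1Hom B A) : T1 (a.map F) (b.map F) :=
  ⟨fun x => F.f1 _ _ (p.c x),
    (F.tr1.precomp (fun x => ⟨a.o x, b.o x, p.c x⟩)).comp
      (a.tr.pair (b.tr.pair p.tr))⟩

def reEnds {a b : T0 A I} (p : T1 a b) (a' b' : T0 A I)
    (ha : ∀ x, a.o x = a'.o x) (hb : ∀ x, b.o x = b'.o x) : T1 a' b' :=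
  ⟨fun x => ⟨(p.c x).val, by rw [← ha x, ← hb x]; exact (p.c x).2⟩, p.tr⟩

end T1

namespace T2

noncomputable def ofFinds {a b : T0 A I} {p q : T1 a b}
    (h : CompFinds I fun x => A.hom2 (a.o x) (b.o x) (p.c x).val (q.c x).val) :
    T2 p q :=
  ⟨fun x => ⟨h.toComputes.choose x, h.toComputes.choose_spec.1 x⟩,
    h.toComputes.choose_spec.2⟩

noncomputable def idc {a b : T0 A I} (p : T1 a b) : T2 p p :=
  ofFinds (A.id2.via (fun x => ⟨(a.o x, b.o x, (p.c x).val), (p.c x).2⟩)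
    (a.tr.pair (b.tr.pair p.tr)))

noncomputable def vcomp {a b : T0 A I} {p q r : T1 a b} (m : T2 p q) (n : T2 q r) :
    T2 p r :=
  ofFinds (A.vcomp.via (fun x =>
      ⟨(a.o x, b.o x, (p.c x).val, (q.c x).val, (r.c x).val, (m.c x).val, (n.c x).val),
        (p.c x).2, (q.c x).2, (r.c x).2, (m.c x).2, (n.c x).2⟩)
    (a.tr.pair (b.tr.pair (p.tr.pair (q.tr.pair (r.tr.pair (m.tr.pair n.tr)))))))

noncomputable def symm {a b : T0 A I} {p q : T1 a b} (m : T2 p q) : T2 q p :=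
  ofFinds (A.inv2.via (fun x =>
      ⟨(a.o x, b.o x, (p.c x).val, (q.c x).val, (m.c x).val),
        (p.c x).2, (q.c x).2, (m.c x).2⟩)
    (a.tr.pair (b.tr.pair (p.tr.pair (q.tr.pair m.tr)))))

noncomputable def hcomp {a b c : T0 A I} {p p' : T1 a b} {q q' : T1 b c}
    (m : T2 p p') (n : T2 q q') : T2 (p.comp q) (p'.comp q') :=
  ofFinds (A.hcomp.via (fun x =>
      ⟨(a.o x, b.o x, c.o x, (p.c x).val, (p'.c x).val, (q.c x).val, (q'.c x).val,
          (m.c x).val, (n.c x).val),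
        (p.c x).2, (p'.c x).2, (q.c x).2, (q'.c x).2, (m.c x).2, (n.c x).2⟩)
    (a.tr.pair (b.tr.pair (c.tr.pair (p.tr.pair (p'.tr.pair (q.tr.pair
      (q'.tr.pair (m.tr.pair n.tr)))))))))

noncomputable def lunit {a b : T0 A I} (p : T1 a b) : T2 (p.comp (T1.idc b)) p :=
  ofFinds (A.lunit.via (fun x => ⟨(a.o x, b.o x, (p.c x).val), (p.c x).2⟩)
    (a.tr.pair (b.tr.pair p.tr)))

noncomputable def runit {a b : T0 A I} (p : T1 a b) : T2 ((T1.idc a).comp p) p :=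
  ofFinds (A.runit.via (fun x => ⟨(a.o x, b.o x, (p.c x).val), (p.c x).2⟩)
    (a.tr.pair (b.tr.pair p.tr)))

noncomputable def linv {a b : T0 A I} (p : T1 a b) : T2 (p.comp p.inv) (T1.idc a) :=
  ofFinds (A.linv.via (fun x => ⟨(a.o x, b.o x, (p.c x).val), (p.c x).2⟩)
    (a.tr.pair (b.tr.pair p.tr)))

noncomputable def rinv {a b : T0 A I} (p : T1 a b) : T2 (p.inv.comp p) (T1.idc b) :=
  ofFinds (A.rinv.via (fun x => ⟨(a.o x, b.o x, (p.c x).val), (p.c x).2⟩)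
    (a.tr.pair (b.tr.pair p.tr)))

noncomputable def assoc {a b c d : T0 A I} (p : T1 a b) (q : T1 b c) (r : T1 c d) :
    T2 ((p.comp q).comp r) (p.comp (q.comp r)) :=
  ofFinds (A.assoc2.via (fun x =>
      ⟨(a.o x, b.o x, c.o x, d.o x, (p.c x).val, (q.c x).val, (r.c x).val),
        (p.c x).2, (q.c x).2, (r.c x).2⟩)
    (a.tr.pair (b.tr.pair (c.tr.pair (d.tr.pair (p.tr.pair (q.tr.pair r.tr)))))))

def pull {a b : T0 A I} {p q : T1 a b} (m : T2 p q) (e : Y → X)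
    (h : CompComputes J fun y => I (e y)) : T2 (p.pull e h) (q.pull e h) :=
  ⟨fun y => m.c (e y), (m.tr.precomp e).comp h⟩

def map {a b : T0 B I} {p q : T1 a b} (m : T2 p q) (F : Eff1Hom B A) :
    T2 (p.map F) (q.map F) :=
  ⟨fun x => F.f2 _ _ _ _ (m.c x),
    (F.tr2.precomp (fun x => ⟨a.o x, b.o x, p.c x, q.c x, m.c x⟩)).comp
      (a.tr.pair (b.tr.pair (p.tr.pair (q.tr.pair m.tr))))⟩

def transport {a b : T0 A I} {p q : T1 a b} (m : T2 p q)
    {a' b' : T0 A I} {p' q' : T1 a' b'}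
    (ha : ∀ x, a.o x = a'.o x) (hb : ∀ x, b.o x = b'.o x)
    (hp : ∀ x, (p.c x).val = (p'.c x).val) (hq : ∀ x, (q.c x).val = (q'.c x).val) :
    T2 p' q' :=
  ⟨fun x => ⟨(m.c x).val, by
      rw [← hp x, ← hq x, ← ha x, ← hb x]; exact (m.c x).2⟩, m.tr⟩

noncomputable def whiskL {a b c : T0 A I} (p : T1 a b) {q r : T1 b c} (m : T2 q r) :
    T2 (p.comp q) (p.comp r) := (idc p).hcomp m

noncomputable def whiskR {a b c : T0 A I} {p q : T1 a b} (m : T2 p q) (r : T1 b c) :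
    T2 (p.comp r) (q.comp r) := m.hcomp (idc r)

noncomputable def cancelR {a b c : T0 A I} {p q : T1 a b} (r : T1 b c)
    (m : T2 (p.comp r) (q.comp r)) : T2 p q :=
  ((((((lunit p).symm.vcomp (whiskL p (linv r).symm)).vcomp
    (assoc p r r.inv).symm).vcomp (whiskR m r.inv)).vcomp
    (assoc q r r.inv)).vcomp (whiskL q (linv r))).vcomp (lunit q)

/-- From a square `n : u ; h' ⇒ h ; v`, produce the conjugate square
`v ; h'⁻¹ ⇒ h⁻¹ ; u`. -/
noncomputable def conj {a a2 b b2 : T0 A I} {u : T1 a b} {h' : T1 b b2}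
    {h : T1 a a2} {v : T1 a2 b2} (m : T2 (u.comp h') (h.comp v)) :
    T2 (v.comp h'.inv) (h.inv.comp u) :=
  cancelR h'
    (((assoc v h'.inv h').vcomp ((whiskL v (rinv h')).vcomp (lunit v))).vcomp
      ((assoc h.inv u h').vcomp ((whiskL h.inv m).vcomp
        (((assoc h.inv h v).symm).vcomp
          ((whiskR (rinv h) v).vcomp (runit v))))).symm)

end T2

/-- `F` preserves identity 1-cells up to a tracked 2-cell. -/
noncomputable def mapIdc (F : Eff1Hom B A) (a : T0 B I) :
    T2 ((T1.idc a).map F) (T1.idc (a.map F)) :=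
  T2.ofFinds (F.fid.via a.o a.tr)

/-- `F` preserves composition of 1-cells up to a tracked 2-cell. -/
noncomputable def mapCompc (F : Eff1Hom B A) {a b c : T0 B I}
    (p : T1 a b) (q : T1 b c) :
    T2 ((p.comp q).map F) ((p.map F).comp (q.map F)) :=
  T2.ofFinds (F.fcomp.via (fun x => ⟨a.o x, b.o x, c.o x, (p.c x, q.c x)⟩)
    (a.tr.pair (b.tr.pair (c.tr.pair (p.tr.pair q.tr)))))

/-- `F` preserves inverse 1-cells up to a tracked 2-cell. -/
noncomputable def mapInvc (F : Eff1Hom B A) {a b : T0 B I} (p : T1 a b) :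
    T2 (p.inv.map F) ((p.map F).inv) :=
  T2.cancelR (p.map F)
    ((((mapCompc F p.inv p).symm.vcomp ((T2.map (T2.rinv p) F).vcomp
        (mapIdc F b))).vcomp (T2.rinv (p.map F)).symm))

end DSL

section HtpyDSL

variable {C B A : Eff1Obj}

/-- The canonical index of 0-cells. -/
def base (B : Eff1Obj) : T0 B (fun b : B.A => B.α b) :=
  ⟨fun b => b, CompComputes.id _⟩

/-- The canonical index of 1-cells. -/
abbrev Idx1 (B : Eff1Obj) : Type := (b : B.A) × (b' : B.A) × B.Cell1 b b'

def enc1 (B : Eff1Obj) : Idx1 B → ℕ :=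
  fun x => Nat.pair (B.α x.1) (Nat.pair (B.α x.2.1) x.2.2.val)

def srcT (B : Eff1Obj) : T0 B (enc1 B) :=
  ⟨fun x => x.1, CompComputes.projL _ _⟩

def tgtT (B : Eff1Obj) : T0 B (enc1 B) :=
  ⟨fun x => x.2.1, (CompComputes.projL _ _).comp (CompComputes.projR _ _)⟩

def cellT (B : Eff1Obj) : T1 (srcT B) (tgtT B) :=
  ⟨fun x => x.2.2, (CompComputes.projR _ _).comp (CompComputes.projR _ _)⟩

variable {X : Type} {I : X → ℕ}

/-- The 1-cell components of a homotopy, as a tracked family. -/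
def htpyT1 {F G : Eff1Hom B A} (H : Eff1Htpy F G) (a : T0 B I) :
    T1 (a.map F) (a.map G) :=
  ⟨fun x => H.H1 (a.o x), (H.trH1.precomp fun x => a.o x).comp a.tr⟩

/-- The naturality square of a homotopy at a tracked family of 1-cells. -/
def htpyNat {F G : Eff1Hom B A} (H : Eff1Htpy F G) {a b : T0 B I} (p : T1 a b) :
    T2 ((p.map F).comp (htpyT1 H b)) ((htpyT1 H a).comp (p.map G)) :=
  ⟨fun x => H.H2 _ _ (p.c x),
    (H.trH2.precomp (fun x => ⟨a.o x, b.o x, p.c x⟩)).comp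
      (a.tr.pair (b.tr.pair p.tr))⟩

/-- Package tracked families into a homotopy. -/
def ofT {F G : Eff1Hom B A} (K1 : T1 ((base B).map F) ((base B).map G))
    (K2 : T2 (((cellT B).map F).comp (K1.pull (fun x : Idx1 B => x.2.1) (tgtT B).tr))
      ((K1.pull (fun x : Idx1 B => x.1) (srcT B).tr).comp ((cellT B).map G))) :
    Eff1Htpy F G :=
  ⟨fun b => K1.c b, fun b b' π => K2.c ⟨b, b', π⟩, K1.tr, K2.tr⟩

/-- Reflexivity homotopy. -/
noncomputable def Eff1Htpy.refl' (F : Eff1Hom B A) : Eff1Htpy F F :=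
  ofT (T1.idc ((base B).map F))
    ((T2.lunit ((cellT B).map F)).vcomp (T2.runit ((cellT B).map F)).symm)

/-- Inverse homotopy. -/
noncomputable def Eff1Htpy.symm' {F G : Eff1Hom B A} (H : Eff1Htpy F G) :
    Eff1Htpy G F :=
  ofT (htpyT1 H (base B)).inv (T2.conj (htpyNat H (cellT B)))

/-- Vertical composition of homotopies. -/
noncomputable def Eff1Htpy.trans' {F G K : Eff1Hom B A}
    (H : Eff1Htpy F G) (H' : Eff1Htpy G K) : Eff1Htpy F K :=
  ofT ((htpyT1 H (base B)).comp (htpyT1 H' (base B)))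
    (((((T2.assoc ((cellT B).map F) (htpyT1 H (tgtT B))
        (htpyT1 H' (tgtT B))).symm.vcomp
      (T2.whiskR (htpyNat H (cellT B)) (htpyT1 H' (tgtT B)))).vcomp
      (T2.assoc (htpyT1 H (srcT B)) ((cellT B).map G) (htpyT1 H' (tgtT B)))).vcomp
      (T2.whiskL (htpyT1 H (srcT B)) (htpyNat H' (cellT B)))).vcomp
      (T2.assoc (htpyT1 H (srcT B)) (htpyT1 H' (srcT B)) ((cellT B).map K)).symm)

/-- Left whiskering of a homotopy by a morphism. -/
def Eff1Htpy.mwhiskL (E : Eff1Hom C B) {F G : Eff1Hom B A} (H : Eff1Htpy F G) :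
    Eff1Htpy (Eff1.compHom E F) (Eff1.compHom E G) :=
  ⟨fun c => H.H1 (E.f0 c), fun c c' π => H.H2 _ _ (E.f1 _ _ π),
    (H.trH1.precomp fun c => E.f0 c).comp E.tr0,
    (H.trH2.precomp (fun x : Idx1 C => ⟨E.f0 x.1, E.f0 x.2.1, E.f1 _ _ x.2.2⟩)).comp
      ((((srcT C).map E).tr).pair ((((tgtT C).map E).tr).pair
        (((cellT C).map E).tr)))⟩

/-- Right whiskering of a homotopy by a morphism. -/
noncomputable def Eff1Htpy.mwhiskR {F G : Eff1Hom B A} (H : Eff1Htpy F G)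
    (E : Eff1Hom A C) : Eff1Htpy (Eff1.compHom F E) (Eff1.compHom G E) :=
  ofT ((htpyT1 H (base B)).map E)
    (((mapCompc E ((cellT B).map F) (htpyT1 H (tgtT B))).symm.vcomp
      (T2.map (htpyNat H (cellT B)) E)).vcomp
      (mapCompc E (htpyT1 H (srcT B)) ((cellT B).map G)))

end HtpyDSL

/-- Congruence for values of composite 1-cells across equalities of endpoints. -/
theorem comp1_val_congr (A : Eff1Obj) {a a' a'' c c' c'' : A.A}
    (h1 : a = c) (h2 : a' = c') (h3 : a'' = c'')
    (u : A.Cell1 a a') (v : A.Cell1 a' a'') (u' : A.Cell1 c c') (v' : A.Cell1 c' c'')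
    (hu : u.val = u'.val) (hv : v.val = v'.val) :
    (A.comp1 a a' a'' u v).val = (A.comp1 c c' c'' u' v').val := by
  subst h1; subst h2; subst h3
  obtain rfl : u = u' := Subtype.ext hu
  obtain rfl : v = v' := Subtype.ext hv
  rfl

/-- Extensionality for morphisms of `EFF₁`. -/
theorem Eff1Hom.ext' {B A : Eff1Obj} {p q : Eff1Hom B A}
    (h0 : ∀ b, p.f0 b = q.f0 b)
    (h1 : ∀ b b' (π : B.Cell1 b b'), (p.f1 b b' π).val = (q.f1 b b' π).val)
    (h2 : ∀ b b' (π π' : B.Cell1 b b') (n : B.Cell2 π π'),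
      (p.f2 b b' π π' n).val = (q.f2 b b' π π' n).val) : p = q := by
  obtain ⟨p0, p1, p2, _, _, _, _, _⟩ := p
  obtain ⟨q0, q1, q2, _, _, _, _, _⟩ := q
  obtain rfl : p0 = q0 := funext h0
  obtain rfl : p1 = q1 := by
    funext b b' π; exact Subtype.ext (h1 b b' π)
  obtain rfl : p2 = q2 := by
    funext b b' π π' n; exact Subtype.ext (h2 b b' π π' n)
  rfl

/-- In `EFF₁`, a fibration `f : B ⟶ A` is trivial (a fibration
that is an equivalence) if and only if `f` has a section `s` for which there exist a
homotopy `H : 1_B ≃ s ∘ f` and a 2-homotopy `M : f H ∼ 1_f` (a computable family of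
2-cells between `f(H₁ b)` and the identity 1-cell `1_{f b}`). -/
theorem EFF1_trivial_fibration_iff {B A : Eff1Obj} (f : B ⟶ A) (hf : Eff1Fib f) :
    Eff1Eqv f ↔
    ∃ (s : A ⟶ B) (_ : s ≫ f = 𝟙 A) (H : Eff1Htpy (𝟙 B) (f ≫ s)) (M : B.A → ℕ),
      (∀ b : B.A, M b ∈ A.hom2 (f.f0 b) (f.f0 b)
        (f.f1 b ((f ≫ s).f0 b) (H.H1 b)).val (A.id1 (f.f0 b)).val) ∧
      CompComputes (fun b : B.A => B.α b) M := by
  constructor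
  · intro heqv
    classical
    obtain ⟨g, hfg, hgf⟩ := heqv
    obtain ⟨He⟩ := hfg
    obtain ⟨Ke0⟩ := hgf
    let fgB : Eff1Hom B B := Eff1.compHom f g
    let gfA : Eff1Hom A A := Eff1.compHom g f
    -- adjointification of the quasi-inverse data
    let Ke : Eff1Htpy gfA (Eff1.idHom A) :=
      ((Ke0.mwhiskR gfA : Eff1Htpy (Eff1.compHom gfA gfA) gfA)).symm'.trans'
        (((He.mwhiskL g).mwhiskR f : Eff1Htpy (Eff1.compHom gfA gfA) gfA).trans'
          (Ke0 : Eff1Htpy gfA (Eff1.idHom A)))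
    let b0 : T0 B (fun b : B.A => B.α b) := base B
    let bf : T0 A (fun b : B.A => B.α b) := b0.map f
    let epsT : T1 (b0.map fgB) b0 := htpyT1 He b0
    let etaf : T1 (bf.map gfA) bf :=
      htpyT1 (Ke0 : Eff1Htpy gfA (Eff1.idHom A)) bf
    -- (*) : fg(η_{fb}) ∼ η_{fgfb}
    let starC : T2 (etaf.map gfA)
        (htpyT1 (Ke0 : Eff1Htpy gfA (Eff1.idHom A)) (bf.map gfA)) :=
      T2.cancelR etaf
        (htpyNat (Ke0 : Eff1Htpy gfA (Eff1.idHom A)) etaf :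
          T2 ((etaf.map gfA).comp etaf)
            ((htpyT1 (Ke0 : Eff1Htpy gfA (Eff1.idHom A)) (bf.map gfA)).comp etaf))
    -- (***) pushed through f : f(ε_{gfb}) ∼ f(gf(ε_b))
    let starEf : T2 ((epsT.map fgB).map f) ((htpyT1 He (b0.map fgB)).map f) :=
      T2.map
        (T2.cancelR epsT
          (htpyNat He epsT :
            T2 ((epsT.map fgB).comp epsT) ((htpyT1 He (b0.map fgB)).comp epsT))) f
    -- (**) : naturality of η at f(ε_b)
    let natKfe : T2 (((epsT.map f).map gfA).comp etaf)
        ((htpyT1 (Ke0 : Eff1Htpy gfA (Eff1.idHom A)) (bf.map gfA)).comp (epsT.map f)) :=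
      (htpyNat (Ke0 : Eff1Htpy gfA (Eff1.idHom A)) (epsT.map f) :
        T2 (((epsT.map f).map gfA).comp etaf)
          ((htpyT1 (Ke0 : Eff1Htpy gfA (Eff1.idHom A)) (bf.map gfA)).comp (epsT.map f)))
    -- the triangle 2-cell : f(ε_b) ∼ Ke.H1 (f b)
    let tri : T2 (epsT.map f) (htpyT1 Ke bf) :=
      (((((T2.whiskL (etaf.map gfA).inv
          (T2.whiskR (starEf.symm :
            T2 ((htpyT1 He (b0.map fgB)).map f) (((epsT.map f).map gfA) :
              T1 ((bf.map gfA).map gfA) (bf.map gfA))) etaf)).vcomp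
        (T2.whiskL (etaf.map gfA).inv natKfe)).vcomp
        (T2.whiskL (etaf.map gfA).inv
          (T2.whiskR (starC.symm) (epsT.map f)))).vcomp
        ((T2.assoc (etaf.map gfA).inv (etaf.map gfA) (epsT.map f)).symm.vcomp
          ((T2.whiskR (T2.rinv (etaf.map gfA)) (epsT.map f)).vcomp
            (T2.runit (epsT.map f))))).symm :
        T2 (epsT.map f)
          ((etaf.map gfA).inv.comp (((htpyT1 He (b0.map fgB)).map f).comp etaf)))
    -- fibration lifting data
    obtain ⟨⟨φ, ψ, pφ, pψ, hlift1⟩, ⟨χ, ω, pχ, pω, hlift2⟩, ⟨θ, pθ, hlift3⟩⟩ := hf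
    choose L0 L1 hL1 hL2 hL3 hL4 using hlift1
    -- the section on 0-cells, with 1-cells ρ_a : g a → s0 a lifting Ke.H1 a
    let s0 : A.A → B.A := fun a => L0 (g.f0 a) a (Ke.H1 a).val (Ke.H1 a).2
    let rhoa : ∀ a : A.A, B.Cell1 (g.f0 a) (s0 a) :=
      fun a => L1 (g.f0 a) a (Ke.H1 a).val (Ke.H1 a).2
    have hs0 : ∀ a, f.f0 (s0 a) = a :=
      fun a => hL1 (g.f0 a) a (Ke.H1 a).val (Ke.H1 a).2
    have hrho : ∀ a, (f.f1 _ _ (rhoa a)).val = (Ke.H1 a).val :=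
      fun a => hL2 (g.f0 a) a (Ke.H1 a).val (Ke.H1 a).2
    have trs0 : CompComputes (fun a : A.A => A.α a) (fun a => B.α (s0 a)) :=
      CompComputes.comp
        (⟨φ, pφ, fun a => hL3 (g.f0 a) a (Ke.H1 a).val (Ke.H1 a).2⟩ :
          CompComputes
            (fun a : A.A => Nat.pair (B.α (g.f0 a)) (Nat.pair (A.α a) (Ke.H1 a).val))
            fun a => B.α (s0 a))
        (g.tr0.pair ((CompComputes.id _).pair Ke.trH1))
    have trrho : CompComputes (fun a : A.A => A.α a) (fun a => (rhoa a).val) :=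
      CompComputes.comp
        (⟨ψ, pψ, fun a => hL4 (g.f0 a) a (Ke.H1 a).val (Ke.H1 a).2⟩ :
          CompComputes
            (fun a : A.A => Nat.pair (B.α (g.f0 a)) (Nat.pair (A.α a) (Ke.H1 a).val))
            fun a => (rhoa a).val)
        (g.tr0.pair ((CompComputes.id _).pair Ke.trH1))
    let s0T : T0 B (fun a : A.A => A.α a) := ⟨s0, trs0⟩
    let gT : T0 B (fun a : A.A => A.α a) := (base A).map g
    let rhoT : T1 gT s0T := ⟨rhoa, trrho⟩
    -- lifting 1-cells
    let s01 : T0 B (enc1 A) := s0T.pull (fun x => x.1) (srcT A).tr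
    let s02 : T0 B (enc1 A) := s0T.pull (fun x => x.2.1) (tgtT A).tr
    let rho1 : T1 (gT.pull (fun x => x.1) (srcT A).tr) s01 :=
      rhoT.pull (fun x : Idx1 A => x.1) (srcT A).tr
    let rho2 : T1 (gT.pull (fun x => x.2.1) (tgtT A).tr) s02 :=
      rhoT.pull (fun x : Idx1 A => x.2.1) (tgtT A).tr
    let gpi : T1 ((srcT A).map g) ((tgtT A).map g) := (cellT A).map g
    let tauT : T1 s01 s02 :=
      (rho1.inv : T1 s01 ((srcT A).map g)).comp
        (gpi.comp (rho2 : T1 ((tgtT A).map g) s02))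
    let piT' : T1 (s01.map f) (s02.map f) :=
      (cellT A).reEnds (s01.map f) (s02.map f)
        (fun x => (hs0 x.1).symm) (fun x => (hs0 x.2.1).symm)
    -- naturality of Ke at π, retyped along the lifts
    let natKpi : T2 ((gpi.map f).comp (rho2.map f)) ((rho1.map f).comp piT') :=
      T2.transport (htpyNat Ke (cellT A)) (fun x => rfl) (fun x => (hs0 x.2.1).symm)
        (fun x => comp1_val_congr A rfl rfl (hs0 x.2.1).symm _ _ _ _ rfl
          (hrho x.2.1).symm)
        (fun x => comp1_val_congr A rfl (hs0 x.1).symm (hs0 x.2.1).symm _ _ _ _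
          (hrho x.1).symm rfl)
    -- the comparison 2-cell f(τ) ⇒ π
    let nT : T2 (tauT.map f) piT' :=
      ((((mapCompc f rho1.inv (gpi.comp rho2)).vcomp
        (T2.whiskL (T1.map rho1.inv f) (mapCompc f gpi rho2))).vcomp
        (T2.whiskL (T1.map rho1.inv f) natKpi)).vcomp
        ((T2.assoc (T1.map rho1.inv f) (rho1.map f) piT').symm.vcomp
          (T2.whiskR
            ((mapCompc f rho1.inv rho1).symm.vcomp
              ((T2.map (T2.rinv rho1) f).vcomp (mapIdc f s01))) piT'))).vcomp
        (T2.runit piT')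
    -- lift the 1-cells
    have KEY1 : ∀ x : Idx1 A,
        ∃ (ρ' : B.Cell1 (s0 x.1) (s0 x.2.1)) (m : B.Cell2 (tauT.c x) ρ'),
          (f.f1 _ _ ρ').val = x.2.2.val ∧
          (f.f2 _ _ _ _ m).val = (nT.c x).val ∧
          ρ'.val ∈ χ (Nat.pair (B.α (s0 x.1)) (Nat.pair (B.α (s0 x.2.1))
            (Nat.pair (f.f1 _ _ (tauT.c x)).val (Nat.pair x.2.2.val
              (Nat.pair (nT.c x).val (tauT.c x).val))))) ∧
          m.val ∈ ω (Nat.pair (B.α (s0 x.1)) (Nat.pair (B.α (s0 x.2.1))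
            (Nat.pair (f.f1 _ _ (tauT.c x)).val (Nat.pair x.2.2.val
              (Nat.pair (nT.c x).val (tauT.c x).val))))) :=
      fun x => hlift2 (s0 x.1) (s0 x.2.1) (f.f1 _ _ (tauT.c x)).val x.2.2.val
        (f.f1 _ _ (tauT.c x)).2 (piT'.c x).2 (nT.c x).val (nT.c x).2
        (tauT.c x) rfl
    choose s1c mc hfs1 hfm htrs1 htrm using KEY1
    let s1T : T1 s01 s02 :=
      ⟨fun x => s1c x,
        CompComputes.comp (⟨χ, pχ, fun x => htrs1 x⟩ :
          CompComputes (fun x : Idx1 A => Nat.pair (B.α (s0 x.1))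
            (Nat.pair (B.α (s0 x.2.1)) (Nat.pair (f.f1 _ _ (tauT.c x)).val
              (Nat.pair x.2.2.val (Nat.pair (nT.c x).val (tauT.c x).val)))))
            fun x => (s1c x).val)
          (s01.tr.pair (s02.tr.pair ((tauT.map f).tr.pair
            (((cellT A).tr).pair (nT.tr.pair tauT.tr)))))⟩
    let mT : T2 tauT s1T :=
      ⟨fun x => mc x,
        CompComputes.comp (⟨ω, pω, fun x => htrm x⟩ :
          CompComputes (fun x : Idx1 A => Nat.pair (B.α (s0 x.1))
            (Nat.pair (B.α (s0 x.2.1)) (Nat.pair (f.f1 _ _ (tauT.c x)).val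
              (Nat.pair x.2.2.val (Nat.pair (nT.c x).val (tauT.c x).val)))))
            fun x => (mc x).val)
          (s01.tr.pair (s02.tr.pair ((tauT.map f).tr.pair
            (((cellT A).tr).pair (nT.tr.pair tauT.tr)))))⟩
    -- lifting 2-cells: index of 2-cells of A
    let X2 : Type := (a : A.A) × (a' : A.A) × (π : A.Cell1 a a') ×
      (π' : A.Cell1 a a') × A.Cell2 π π'
    let enc2 : X2 → ℕ := fun x => Nat.pair (A.α x.1) (Nat.pair (A.α x.2.1)
      (Nat.pair x.2.2.1.val (Nat.pair x.2.2.2.1.val x.2.2.2.2.val)))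
    let c2a : CompComputes enc2 (fun x => A.α x.1) := CompComputes.projL _ _
    let c2b : CompComputes enc2 (fun x => A.α x.2.1) :=
      (CompComputes.projL _ _).comp (CompComputes.projR _ _)
    let c2p : CompComputes enc2 (fun x => x.2.2.1.val) :=
      (CompComputes.projL _ _).comp
        ((CompComputes.projR _ _).comp (CompComputes.projR _ _))
    let c2q : CompComputes enc2 (fun x => x.2.2.2.1.val) :=
      (CompComputes.projL _ _).comp ((CompComputes.projR _ _).comp
        ((CompComputes.projR _ _).comp (CompComputes.projR _ _)))
    let c2n : CompComputes enc2 (fun x => x.2.2.2.2.val) :=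
      (CompComputes.projR _ _).comp ((CompComputes.projR _ _).comp
        ((CompComputes.projR _ _).comp (CompComputes.projR _ _)))
    let ep1 : X2 → Idx1 A := fun x => ⟨x.1, x.2.1, x.2.2.1⟩
    let ep2 : X2 → Idx1 A := fun x => ⟨x.1, x.2.1, x.2.2.2.1⟩
    let trk1 : CompComputes enc2 (fun x => enc1 A (ep1 x)) := c2a.pair (c2b.pair c2p)
    let trk2 : CompComputes enc2 (fun x => enc1 A (ep2 x)) := c2a.pair (c2b.pair c2q)
    let s1p1 : T1 (s01.pull ep1 trk1) (s02.pull ep1 trk1) := s1T.pull ep1 trk1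
    let s1p2 : T1 (s01.pull ep1 trk1) (s02.pull ep1 trk1) := s1T.pull ep2 trk2
    let nc2 : T2 ((cellT A).pull ep1 trk1) ((cellT A).pull ep2 trk2) :=
      ⟨fun x => x.2.2.2.2, c2n⟩
    let rA2 : T1 (gT.pull (fun x : X2 => x.1) c2a) (s0T.pull (fun x : X2 => x.1) c2a) :=
      rhoT.pull (fun x : X2 => x.1) c2a
    let rB2 : T1 (gT.pull (fun x : X2 => x.2.1) c2b)
        (s0T.pull (fun x : X2 => x.2.1) c2b) :=
      rhoT.pull (fun x : X2 => x.2.1) c2b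
    let mid2 : T2 (tauT.pull ep1 trk1) (tauT.pull ep2 trk2) :=
      (T2.whiskL rA2.inv (T2.hcomp (T2.map nc2 g) (T2.idc rB2)) :
        T2 (rA2.inv.comp ((((cellT A).pull ep1 trk1).map g).comp rB2))
          (rA2.inv.comp ((((cellT A).pull ep2 trk2).map g).comp rB2)))
    let m0 : T2 s1p1 s1p2 :=
      ((mT.pull ep1 trk1).symm.vcomp mid2).vcomp (mT.pull ep2 trk2)
    have KEY2 : ∀ x : X2,
        ∃ m' : B.Cell2 (s1p1.c x) (s1p2.c x),
          (f.f2 _ _ _ _ m').val = x.2.2.2.2.val ∧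
          m'.val ∈ θ (Nat.pair (B.α (s0 x.1)) (Nat.pair (B.α (s0 x.2.1))
            (Nat.pair (s1p1.c x).val (Nat.pair (s1p2.c x).val
              (Nat.pair (m0.c x).val x.2.2.2.2.val))))) := by
      intro x
      have h1 : (f.f1 (s0 x.1) (s0 x.2.1) (s1p1.c x)).val = x.2.2.1.val :=
        hfs1 ⟨x.1, x.2.1, x.2.2.1⟩
      have h2 : (f.f1 (s0 x.1) (s0 x.2.1) (s1p2.c x)).val = x.2.2.2.1.val :=
        hfs1 ⟨x.1, x.2.1, x.2.2.2.1⟩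
      refine hlift3 (s0 x.1) (s0 x.2.1) (s1p1.c x) (s1p2.c x) (m0.c x)
        x.2.2.2.2.val ?_
      rw [h1, h2, hs0 x.1, hs0 x.2.1]
      exact x.2.2.2.2.2
    choose s2c hfs2 htrs2 using KEY2
    have trs2 : CompComputes enc2 (fun x => (s2c x).val) :=
      CompComputes.comp (⟨θ, pθ, fun x => htrs2 x⟩ :
        CompComputes (fun x : X2 => Nat.pair (B.α (s0 x.1))
          (Nat.pair (B.α (s0 x.2.1)) (Nat.pair (s1p1.c x).val
            (Nat.pair (s1p2.c x).val (Nat.pair (m0.c x).val x.2.2.2.2.val)))))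
          fun x => (s2c x).val)
        ((s0T.pull (fun x : X2 => x.1) c2a).tr.pair
          ((s0T.pull (fun x : X2 => x.2.1) c2b).tr.pair
            (s1p1.tr.pair (s1p2.tr.pair (m0.tr.pair c2n)))))
    -- the structural 2-cells for the section
    let eid : A.A → Idx1 A := fun a => ⟨a, a, A.id1 a⟩
    let trkid : CompComputes (fun a : A.A => A.α a) (fun a => enc1 A (eid a)) :=
      (CompComputes.id _).pair ((CompComputes.id _).pair A.tr_id1)
    let fidT : T2 (s1T.pull eid trkid) (T1.idc s0T) :=
      ((mT.pull eid trkid).symm.vcomp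
        ((T2.whiskL rhoT.inv
          ((T2.whiskR (mapIdc g (base A)) rhoT).vcomp (T2.runit rhoT))) :
          T2 (tauT.pull eid trkid) (rhoT.inv.comp rhoT))).vcomp (T2.rinv rhoT)
    -- fcomp data
    let XC : Type := (a : A.A) × (a' : A.A) × (a'' : A.A) ×
      (A.Cell1 a a' × A.Cell1 a' a'')
    let encC : XC → ℕ := fun x => Nat.pair (A.α x.1) (Nat.pair (A.α x.2.1)
      (Nat.pair (A.α x.2.2.1) (Nat.pair x.2.2.2.1.val x.2.2.2.2.val)))
    let cca : CompComputes encC (fun x => A.α x.1) := CompComputes.projL _ _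
    let ccb : CompComputes encC (fun x => A.α x.2.1) :=
      (CompComputes.projL _ _).comp (CompComputes.projR _ _)
    let ccc : CompComputes encC (fun x => A.α x.2.2.1) :=
      (CompComputes.projL _ _).comp
        ((CompComputes.projR _ _).comp (CompComputes.projR _ _))
    let ccu : CompComputes encC (fun x => x.2.2.2.1.val) :=
      (CompComputes.projL _ _).comp ((CompComputes.projR _ _).comp
        ((CompComputes.projR _ _).comp (CompComputes.projR _ _)))
    let ccv : CompComputes encC (fun x => x.2.2.2.2.val) :=
      (CompComputes.projR _ _).comp ((CompComputes.projR _ _).comp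
        ((CompComputes.projR _ _).comp (CompComputes.projR _ _)))
    let ec1 : XC → Idx1 A := fun x => ⟨x.1, x.2.1, x.2.2.2.1⟩
    let ec2 : XC → Idx1 A := fun x => ⟨x.2.1, x.2.2.1, x.2.2.2.2⟩
    let ecc : XC → Idx1 A := fun x => ⟨x.1, x.2.2.1, A.comp1 _ _ _ x.2.2.2.1 x.2.2.2.2⟩
    let trkc1 : CompComputes encC (fun x => enc1 A (ec1 x)) := cca.pair (ccb.pair ccu)
    let trkc2 : CompComputes encC (fun x => enc1 A (ec2 x)) := ccb.pair (ccc.pair ccv)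
    let trkcc : CompComputes encC (fun x => enc1 A (ecc x)) :=
      cca.pair (ccc.pair
        ((A.tr_comp1.precomp (fun x : XC =>
          ⟨⟨x.1, x.2.1, x.2.2.1, x.2.2.2.1.val, x.2.2.2.2.val⟩,
            x.2.2.2.1.2, x.2.2.2.2.2⟩)).comp
          (cca.pair (ccb.pair (ccc.pair (ccu.pair ccv))))))
    let aX : T0 A encC := ⟨fun x => x.1, cca⟩
    let bX : T0 A encC := ⟨fun x => x.2.1, ccb⟩
    let cX : T0 A encC := ⟨fun x => x.2.2.1, ccc⟩
    let cu : T1 aX bX := ⟨fun x => x.2.2.2.1, ccu⟩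
    let cv : T1 bX cX := ⟨fun x => x.2.2.2.2, ccv⟩
    let rhoA : T1 (gT.pull (fun x : XC => x.1) cca) (s0T.pull (fun x : XC => x.1) cca) :=
      rhoT.pull (fun x : XC => x.1) cca
    let rhoB : T1 (gT.pull (fun x : XC => x.2.1) ccb)
        (s0T.pull (fun x : XC => x.2.1) ccb) := rhoT.pull (fun x : XC => x.2.1) ccb
    let rhoC : T1 (gT.pull (fun x : XC => x.2.2.1) ccc)
        (s0T.pull (fun x : XC => x.2.2.1) ccc) := rhoT.pull (fun x : XC => x.2.2.1) ccc
    let s1u : T1 (s01.pull ec1 trkc1) (s02.pull ec1 trkc1) := s1T.pull ec1 trkc1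
    let s1v : T1 (s02.pull ec1 trkc1) (s0T.pull (fun x : XC => x.2.2.1) ccc) :=
      s1T.pull ec2 trkc2
    let s1uv : T1 (s01.pull ec1 trkc1) (s0T.pull (fun x : XC => x.2.2.1) ccc) :=
      s1T.pull ecc trkcc
    let innerC : T2 ((cv.map g).comp rhoC)
        (rhoB.comp (rhoB.inv.comp ((cv.map g).comp rhoC))) :=
      (T2.runit ((cv.map g).comp rhoC)).symm.vcomp
        ((T2.whiskR (T2.linv rhoB).symm ((cv.map g).comp rhoC)).vcomp
          (T2.assoc rhoB rhoB.inv ((cv.map g).comp rhoC)))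
    let fcompT : T2 s1uv (s1u.comp s1v) :=
      ((mT.pull ecc trkcc).symm.vcomp
        ((((((T2.whiskL rhoA.inv (T2.whiskR (mapCompc g cu cv) rhoC) :
            T2 (tauT.pull ecc trkcc)
              (rhoA.inv.comp (((cu.map g).comp (cv.map g)).comp rhoC))).vcomp
          (T2.whiskL rhoA.inv (T2.assoc (cu.map g) (cv.map g) rhoC))).vcomp
          (T2.whiskL rhoA.inv (T2.whiskL (cu.map g) innerC))).vcomp
          (T2.whiskL rhoA.inv
            (T2.assoc (cu.map g) rhoB (rhoB.inv.comp ((cv.map g).comp rhoC))).symm)).vcomp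
          (T2.assoc rhoA.inv ((cu.map g).comp rhoB)
            (rhoB.inv.comp ((cv.map g).comp rhoC))).symm))).vcomp
        ((T2.hcomp (mT.pull ec1 trkc1) (mT.pull ec2 trkc2) :
          T2 ((rhoA.inv.comp ((cu.map g).comp rhoB)).comp
              (rhoB.inv.comp ((cv.map g).comp rhoC)))
            (s1u.comp s1v)))
    -- the section morphism
    let s : Eff1Hom A B :=
      { f0 := s0
        f1 := fun a a' π => s1c ⟨a, a', π⟩
        f2 := fun a a' π π' n => s2c ⟨a, a', π, π', n⟩
        tr0 := trs0
        tr1 := s1T.tr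
        tr2 := trs2
        fid := CompComputes.toFinds fidT.tr (fun a => (fidT.c a).2)
        fcomp := CompComputes.toFinds fcompT.tr (fun x => (fcompT.c x).2) }
    have hsec : (s ≫ f : A ⟶ A) = 𝟙 A :=
      Eff1Hom.ext' (fun a => hs0 a) (fun a a' π => hfs1 ⟨a, a', π⟩)
        (fun a a' π π' n => hfs2 ⟨a, a', π, π', n⟩)
    -- the homotopy H : 1_B ≃ s ∘ f
    let rhof : T1 (gT.pull (fun b : B.A => f.f0 b) f.tr0)
        (s0T.pull (fun b : B.A => f.f0 b) f.tr0) :=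
      rhoT.pull (fun b : B.A => f.f0 b) f.tr0
    let H1T : T1 (base B) (s0T.pull (fun b : B.A => f.f0 b) f.tr0) :=
      (epsT.inv : T1 (base B) (b0.map fgB)).comp
        (rhof : T1 (b0.map fgB) (s0T.pull (fun b : B.A => f.f0 b) f.tr0))
    let efp : Idx1 B → Idx1 A := fun x => ⟨f.f0 x.1, f.f0 x.2.1, f.f1 _ _ x.2.2⟩
    let trkfp : CompComputes (enc1 B) (fun x => enc1 A (efp x)) :=
      ((srcT B).map f).tr.pair ((((tgtT B).map f).tr).pair ((cellT B).map f).tr)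
    let e1B : T1 ((srcT B).map fgB) (srcT B) := htpyT1 He (srcT B)
    let e2B : T1 ((tgtT B).map fgB) (tgtT B) := htpyT1 He (tgtT B)
    let uB : T1 (srcT B) (tgtT B) := cellT B
    let c1B : T2 (uB.comp e2B.inv) (e1B.inv.comp (uB.map fgB)) :=
      T2.conj (htpyNat He uB : T2 ((uB.map fgB).comp e2B) (e1B.comp uB))
    let r1B : T1 (gT.pull (fun x : Idx1 B => f.f0 x.1) ((srcT B).map f).tr)
        (s0T.pull (fun x : Idx1 B => f.f0 x.1) ((srcT B).map f).tr) :=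
      rhoT.pull (fun x : Idx1 B => f.f0 x.1) ((srcT B).map f).tr
    let r2B : T1 (gT.pull (fun x : Idx1 B => f.f0 x.2.1) ((tgtT B).map f).tr)
        (s0T.pull (fun x : Idx1 B => f.f0 x.2.1) ((tgtT B).map f).tr) :=
      rhoT.pull (fun x : Idx1 B => f.f0 x.2.1) ((tgtT B).map f).tr
    let inner2 : T2 ((uB.map fgB).comp r2B) (r1B.comp (s1T.pull efp trkfp)) :=
      (T2.runit ((uB.map fgB).comp r2B)).symm.vcomp
        ((T2.whiskR (T2.linv r1B).symm ((uB.map fgB).comp r2B)).vcomp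
          ((T2.assoc r1B r1B.inv ((uB.map fgB).comp r2B)).vcomp
            (T2.whiskL r1B
              ((mT.pull efp trkfp) :
                T2 (r1B.inv.comp ((uB.map fgB).comp r2B)) (s1T.pull efp trkfp)))))
    let H2T : T2 (uB.comp (e2B.inv.comp r2B))
        ((e1B.inv.comp r1B).comp (s1T.pull efp trkfp)) :=
      ((((T2.assoc uB e2B.inv r2B).symm.vcomp
        (T2.whiskR c1B r2B)).vcomp
        (T2.assoc e1B.inv (uB.map fgB) r2B)).vcomp
        (T2.whiskL e1B.inv inner2)).vcomp
        (T2.assoc e1B.inv r1B (s1T.pull efp trkfp)).symm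
    let H : Eff1Htpy (𝟙 B) (f ≫ s) := ofT H1T H2T
    -- the 2-homotopy M : f(H₁ b) ⇒ 1
    let Hf' : T1 (b0.map f) (b0.map f) :=
      (H1T.map f).reEnds (b0.map f) (b0.map f)
        (fun _ => rfl) (fun b => hs0 (f.f0 b))
    let rhoff : T1 (bf.map gfA) bf :=
      (rhof.map f).reEnds (bf.map gfA) bf (fun _ => rfl) (fun b => hs0 (f.f0 b))
    let t1 : T2 Hf' ((epsT.inv.map f).comp rhoff) :=
      T2.transport (mapCompc f epsT.inv rhof) (fun _ => rfl)
        (fun b => hs0 (f.f0 b)) (fun _ => rfl)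
        (fun b => comp1_val_congr A rfl rfl (hs0 (f.f0 b)) _ _ _ _ rfl rfl)
    let t3 : T2 rhoff (epsT.map f) :=
      T2.transport tri.symm (fun _ => rfl) (fun _ => rfl)
        (fun b => (hrho (f.f0 b)).symm) (fun _ => rfl)
    let MT : T2 Hf' (T1.idc (b0.map f)) :=
      t1.vcomp ((T2.whiskR (mapInvc f epsT) rhoff).vcomp
        ((T2.whiskL (epsT.map f).inv t3).vcomp (T2.rinv (epsT.map f))))
    exact ⟨s, hsec, H, fun b => (MT.c b).val, fun b => (MT.c b).2, MT.tr⟩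



  · rintro ⟨s, hsec, H, M, hM, trM⟩
    refine ⟨s, ⟨H.symm'⟩, ?_⟩
    rw [hsec]
    exact ⟨Eff1Htpy.refl' _⟩

end EffPaper
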